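/- arXiv:2303.16279 — 5 statements merged into one kernel-verified Lean document; each statement's English description precedes it below -/
import Mathlib

section
/- Consider the A-CODER iterates with x_0 ∈ dom(g) an arbitrary initial point. Then for all k ≥ 1 and all u ∈ dom(g): f̄(y_k) − f̄(u) + (3(1 + A_{k−1}γ)/(10 A_k))‖u − v_k‖² ≤ ‖u − x_0‖²/(2 A_k). In particular, if x* = argmin_x f̄(x) exists, then f̄(y_k) − f̄(x*) ≤ ‖x* − x_0‖²/(2 A_k). -/
noncomputable section
open MeasureTheory Finset Set RealInnerProductSpace

abbrev Euc (d : ℕ) := EuclideanSpace ℝ (Fin d)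

def blockMask {d m : ℕ} (blk : Fin d → Fin m) (j : Fin m) (z : Euc d) : Euc d :=
  (EuclideanSpace.equiv (Fin d) ℝ).symm fun i => if blk i = j then z i else 0

def blockCombine {d m : ℕ} (blk : Fin d → Fin m) (j : ℕ) (x y : Euc d) : Euc d :=
  (EuclideanSpace.equiv (Fin d) ℝ).symm fun i => if (blk i : ℕ) + 1 ≤ j then x i else y i

def quadForm {d : ℕ} (Q : Matrix (Fin d) (Fin d) ℝ) (z : Euc d) : ℝ :=
  ∑ i, ∑ i', Q i i' * z i * z i'

def keepGE {d m : ℕ} (blk : Fin d → Fin m) (j : ℕ) (Q : Matrix (Fin d) (Fin d) ℝ) :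
    Matrix (Fin d) (Fin d) ℝ :=
  Matrix.of fun i i' => if j ≤ (blk i : ℕ) + 1 ∧ j ≤ (blk i' : ℕ) + 1 then Q i i' else 0

def Qtilde {d m : ℕ} (blk : Fin d → Fin m) (Q : Fin m → Matrix (Fin d) (Fin d) ℝ) :
    Matrix (Fin d) (Fin d) ℝ :=
  ∑ j : Fin m, (keepGE blk ((j : ℕ) + 1) (Q j) + keepGE blk ((j : ℕ) + 2) (Q j))

def specNorm {d : ℕ} (Q : Matrix (Fin d) (Fin d) ℝ) : ℝ :=
  ‖Matrix.toEuclideanCLM (𝕜 := ℝ) Q‖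

def bigL {d m : ℕ} (blk : Fin d → Fin m) (Q : Fin m → Matrix (Fin d) (Fin d) ℝ) : ℝ :=
  Real.sqrt (2 * specNorm (Qtilde blk Q))

def BlockLip {d m : ℕ} (blk : Fin d → Fin m) (f : Euc d → ℝ)
    (Q : Fin m → Matrix (Fin d) (Fin d) ℝ) : Prop :=
  ∀ (j : Fin m) (x y : Euc d),
    ‖blockMask blk j (gradient f x) - blockMask blk j (gradient f y)‖ ^ 2 ≤
      quadForm (Q j) (x - y)

def SubgradStrongConvex {d : ℕ} (γ : ℝ) (g : Euc d → ℝ) : Prop :=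
  ∀ x y s : Euc d, (∀ z, g x + ⟪s, z - x⟫ ≤ g z) →
    g x + ⟪s, y - x⟫ + γ / 2 * ‖y - x‖ ^ 2 ≤ g y

/-! ### Auxiliary: coordinates, masks, quadratic forms -/

namespace ACAux

variable {d m : ℕ}

@[simp] lemma euc_symm_apply (fx : Fin d → ℝ) (i : Fin d) :
    ((EuclideanSpace.equiv (Fin d) ℝ).symm fx) i = fx i := rfl

lemma inner_coords (a b : Euc d) : ⟪a, b⟫ = ∑ i, a i * b i := by
  rw [PiLp.inner_apply]; simp [RCLike.inner_apply, mul_comm]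

lemma norm_sq_coords (a : Euc d) : ‖a‖ ^ 2 = ∑ i, a i ^ 2 := by
  rw [← real_inner_self_eq_norm_sq, inner_coords]
  exact Finset.sum_congr rfl fun i _ => (sq (a i)).symm

/-- maskGE : keep coordinates in blocks with index + 1 ≥ t -/
def mGE (blk : Fin d → Fin m) (t : ℕ) (z : Euc d) : Euc d :=
  (EuclideanSpace.equiv (Fin d) ℝ).symm fun i => if t ≤ (blk i : ℕ) + 1 then z i else 0

variable {blk : Fin d → Fin m}

@[simp] lemma blockMask_apply (j : Fin m) (z : Euc d) (i : Fin d) :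
    blockMask blk j z i = if blk i = j then z i else 0 := rfl

@[simp] lemma mGE_apply (t : ℕ) (z : Euc d) (i : Fin d) :
    mGE blk t z i = if t ≤ (blk i : ℕ) + 1 then z i else 0 := rfl

@[simp] lemma blockCombine_apply (t : ℕ) (x y : Euc d) (i : Fin d) :
    blockCombine blk t x y i = if (blk i : ℕ) + 1 ≤ t then x i else y i := rfl

lemma blockMask_sub (j : Fin m) (a b : Euc d) :
    blockMask blk j (a - b) = blockMask blk j a - blockMask blk j b := by
  ext i; by_cases h : blk i = j <;> simp [h]

lemma sum_apply {ι : Type*} (s : Finset ι) (F : ι → Euc d) (i : Fin d) :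
    (∑ j ∈ s, F j) i = ∑ j ∈ s, F j i := by
  classical
  induction s using Finset.induction_on with
  | empty => simp
  | insert _ _ hns ih => rw [Finset.sum_insert hns, Finset.sum_insert hns, PiLp.add_apply, ih]

lemma sum_blockMask (z : Euc d) : ∑ j : Fin m, blockMask blk j z = z := by
  ext i
  rw [sum_apply]
  simp only [blockMask_apply]
  simp

lemma inner_blockMask (j : Fin m) (a b : Euc d) :
    ⟪a, blockMask blk j b⟫ = ⟪blockMask blk j a, blockMask blk j b⟫ := by
  rw [inner_coords, inner_coords]
  refine Finset.sum_congr rfl fun i _ => ?_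
  by_cases h : blk i = j <;> simp [h]

lemma inner_blockMask' (j : Fin m) (a b : Euc d) :
    ⟪blockMask blk j a, b⟫ = ⟪blockMask blk j a, blockMask blk j b⟫ := by
  rw [real_inner_comm, inner_blockMask, real_inner_comm]

lemma norm_sq_eq_sum_blockMask (z : Euc d) :
    ‖z‖ ^ 2 = ∑ j : Fin m, ‖blockMask blk j z‖ ^ 2 := by
  have h1 : ∑ j : Fin m, ⟪blockMask blk j z, z⟫ = ⟪z, z⟫ := by
    rw [← sum_inner, sum_blockMask]
  rw [← real_inner_self_eq_norm_sq, ← h1]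
  refine Finset.sum_congr rfl fun j _ => ?_
  rw [inner_blockMask', real_inner_self_eq_norm_sq]

lemma combine_sub_left (t : ℕ) (x y : Euc d) :
    blockCombine blk t x y - x = mGE blk (t + 1) (y - x) := by
  ext i
  simp only [PiLp.sub_apply, blockCombine_apply, mGE_apply]
  by_cases h : (blk i : ℕ) + 1 ≤ t
  · rw [if_pos h, if_neg (by omega)]; ring
  · rw [if_neg h, if_pos (by omega)]

lemma mGE_add_blockMask (j : Fin m) (z : Euc d) :
    mGE blk ((j : ℕ) + 2) z + blockMask blk j z = mGE blk ((j : ℕ) + 1) z := by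
  ext i
  simp only [PiLp.add_apply, mGE_apply, blockMask_apply]
  rcases lt_trichotomy ((blk i : ℕ)) ((j : ℕ)) with h | h | h
  · rw [if_neg (by omega), if_neg (by simp [Fin.ext_iff]; omega), if_neg (by omega)]; ring
  · rw [if_neg (by omega), if_pos (by simpa [Fin.ext_iff] using h), if_pos (by omega)]; ring
  · rw [if_pos (by omega), if_neg (by simp [Fin.ext_iff]; omega), if_pos (by omega)]; ring

lemma combine_zero (x y : Euc d) : blockCombine blk 0 x y = y := by
  ext i; simp

lemma combine_m (x y : Euc d) : blockCombine blk m x y = x := by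
  ext i; simp [Nat.succ_le_of_lt (blk i).isLt]

lemma combine_succ_add_blockMask (j : Fin m) (x y : Euc d) :
    blockCombine blk ((j : ℕ) + 1) x y + blockMask blk j (y - x) = blockCombine blk (j : ℕ) x y := by
  ext i
  simp only [PiLp.add_apply, blockCombine_apply, blockMask_apply, PiLp.sub_apply]
  rcases lt_trichotomy ((blk i : ℕ)) ((j : ℕ)) with h | h | h
  · rw [if_pos (by omega), if_neg (by simp [Fin.ext_iff]; omega), if_pos (by omega)]; ring
  · rw [if_pos (by omega), if_pos (by simpa [Fin.ext_iff] using h), if_neg (by omega)]; ring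
  · rw [if_neg (by omega), if_neg (by simp [Fin.ext_iff]; omega), if_neg (by omega)]; ring

/-! quadForm lemmas -/

lemma quadForm_eq_dot (Q : Matrix (Fin d) (Fin d) ℝ) (z : Euc d) :
    quadForm Q z = dotProduct (fun i => z i) (Q.mulVec fun i => z i) := by
  rw [quadForm, dotProduct]
  refine Finset.sum_congr rfl fun i _ => ?_
  rw [Matrix.mulVec, dotProduct, Finset.mul_sum]
  exact Finset.sum_congr rfl fun i' _ => by ring

lemma quadForm_nonneg {Q : Matrix (Fin d) (Fin d) ℝ} (hQ : Q.PosSemidef) (z : Euc d) :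
    0 ≤ quadForm Q z := by
  rw [quadForm_eq_dot]
  have := hQ.dotProduct_mulVec_nonneg (fun i => z i)
  simpa using this

lemma quadForm_neg (Q : Matrix (Fin d) (Fin d) ℝ) (z : Euc d) :
    quadForm Q (-z) = quadForm Q z := by
  rw [quadForm, quadForm]
  refine Finset.sum_congr rfl fun i _ => Finset.sum_congr rfl fun i' _ => ?_
  simp only [PiLp.neg_apply]; ring

lemma quadForm_add_matrix (Q₁ Q₂ : Matrix (Fin d) (Fin d) ℝ) (z : Euc d) :
    quadForm (Q₁ + Q₂) z = quadForm Q₁ z + quadForm Q₂ z := by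
  rw [quadForm, quadForm, quadForm, ← Finset.sum_add_distrib]
  refine Finset.sum_congr rfl fun i _ => ?_
  rw [← Finset.sum_add_distrib]
  refine Finset.sum_congr rfl fun i' _ => ?_
  simp [Matrix.add_apply]; ring

lemma quadForm_sum_matrix {ι : Type*} (s : Finset ι) (M : ι → Matrix (Fin d) (Fin d) ℝ)
    (z : Euc d) : quadForm (∑ j ∈ s, M j) z = ∑ j ∈ s, quadForm (M j) z := by
  classical
  induction s using Finset.induction_on with
  | empty => simp [quadForm]
  | insert _ _ hns ih =>
      rw [Finset.sum_insert hns, Finset.sum_insert hns, quadForm_add_matrix, ih]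

lemma quadForm_keepGE (t : ℕ) (Q : Matrix (Fin d) (Fin d) ℝ) (z : Euc d) :
    quadForm (keepGE blk t Q) z = quadForm Q (mGE blk t z) := by
  rw [quadForm, quadForm]
  refine Finset.sum_congr rfl fun i _ => Finset.sum_congr rfl fun i' _ => ?_
  simp only [keepGE, Matrix.of_apply, mGE_apply]
  by_cases h : t ≤ (blk i : ℕ) + 1 <;> by_cases h' : t ≤ (blk i' : ℕ) + 1 <;>
    simp [h, h'] <;> ring

lemma quadForm_line (Q : Matrix (Fin d) (Fin d) ℝ) (u δ : Euc d) (t : ℝ) :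
    quadForm Q (u + t • δ) =
      quadForm Q u + t * (∑ i, ∑ i', Q i i' * (u i * δ i' + δ i * u i')) +
        t ^ 2 * quadForm Q δ := by
  simp only [quadForm, Finset.mul_sum, ← Finset.sum_add_distrib]
  refine Finset.sum_congr rfl fun i _ => Finset.sum_congr rfl fun i' _ => ?_
  simp only [PiLp.add_apply, PiLp.smul_apply, smul_eq_mul]
  ring

lemma quadForm_convex_seg {Q : Matrix (Fin d) (Fin d) ℝ} (hQ : Q.PosSemidef)
    (u δ : Euc d) {t : ℝ} (ht0 : 0 ≤ t) (ht1 : t ≤ 1) :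
    quadForm Q (u + t • δ) ≤ (1 - t) * quadForm Q u + t * quadForm Q (u + δ) := by
  have h1 : quadForm Q (u + (1:ℝ) • δ) = quadForm Q (u + δ) := by rw [one_smul]
  rw [quadForm_line, ← h1, quadForm_line]
  have hδ := quadForm_nonneg hQ δ
  nlinarith [mul_nonneg (mul_nonneg ht0 (sub_nonneg.2 ht1)) hδ]

lemma quadForm_le_spec (Q : Matrix (Fin d) (Fin d) ℝ) (z : Euc d) :
    quadForm Q z ≤ specNorm Q * ‖z‖ ^ 2 := by
  have happ : ∀ i, (Matrix.toEuclideanCLM (𝕜 := ℝ) Q z) i = ∑ i', Q i i' * z i' := by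
    intro i
    have : (Matrix.toEuclideanCLM (𝕜 := ℝ) Q z) i = (Matrix.toLin' Q (WithLp.equiv _ _ z)) i := rfl
    rw [this, Matrix.toLin'_apply, Matrix.mulVec, dotProduct]
    rfl
  have hq : quadForm Q z = ⟪z, Matrix.toEuclideanCLM (𝕜 := ℝ) Q z⟫ := by
    rw [inner_coords, quadForm]
    refine Finset.sum_congr rfl fun i _ => ?_
    rw [happ i, Finset.mul_sum]
    exact Finset.sum_congr rfl fun i' _ => by ring
  rw [hq]
  calc ⟪z, Matrix.toEuclideanCLM (𝕜 := ℝ) Q z⟫ ≤ ‖z‖ * ‖Matrix.toEuclideanCLM (𝕜 := ℝ) Q z‖ :=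
        real_inner_le_norm _ _
    _ ≤ ‖z‖ * (specNorm Q * ‖z‖) := by
        have := (Matrix.toEuclideanCLM (𝕜 := ℝ) Q).le_opNorm z
        exact mul_le_mul_of_nonneg_left this (norm_nonneg z)
    _ = specNorm Q * ‖z‖ ^ 2 := by ring

lemma specNorm_nonneg (Q : Matrix (Fin d) (Fin d) ℝ) : 0 ≤ specNorm Q := norm_nonneg _

end ACAux

namespace ACAux
variable {d m : ℕ} {blk : Fin d → Fin m} {f : Euc d → ℝ}
  {Q : Fin m → Matrix (Fin d) (Fin d) ℝ}

lemma hasDerivAt_line (hf : Differentiable ℝ f) (w δ : Euc d) (t : ℝ) :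
    HasDerivAt (fun s : ℝ => f (w + s • δ)) ⟪gradient f (w + t • δ), δ⟫ t := by
  have hc : HasDerivAt (fun s : ℝ => w + s • δ) δ t := by
    simpa using ((hasDerivAt_id t).smul_const δ).const_add w
  have hfd := (hf (w + t • δ)).hasGradientAt.hasFDerivAt
  have hcomp := hfd.comp_hasDerivAt t hc
  simp only [InnerProductSpace.toDual_apply_apply] at hcomp
  exact hcomp

lemma fconv_ineq (hfc : ConvexOn ℝ Set.univ f) (hf : Differentiable ℝ f) (x u : Euc d) :
    f x + ⟪gradient f x, u - x⟫ ≤ f u := by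
  set δ := u - x with hδ
  set φ : ℝ → ℝ := fun s => f (x + s • δ) with hφ
  have hconv : ConvexOn ℝ Set.univ φ := by
    refine ⟨convex_univ, fun s _ t _ α β hα hβ hαβ => ?_⟩
    have hcomb : x + (α * s + β * t) • δ = α • (x + s • δ) + β • (x + t • δ) := by
      have : α • (x + s • δ) + β • (x + t • δ) = (α + β) • x + (α * s + β * t) • δ := by
        module
      rw [this, hαβ, one_smul]
    have := hfc.2 (Set.mem_univ (x + s • δ)) (Set.mem_univ (x + t • δ)) hα hβ hαβ
    simpa [hφ, smul_eq_mul, hcomb] using this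
  have hd : HasDerivAt φ ⟪gradient f (x + (0:ℝ) • δ), δ⟫ 0 := hasDerivAt_line hf x δ 0
  have hslope := hconv.le_slope_of_hasDerivAt (Set.mem_univ (0:ℝ)) (Set.mem_univ (1:ℝ))
    one_pos hd
  have h0 : φ 0 = f x := by rw [hφ]; norm_num
  have h1 : φ 1 = f u := by rw [hφ, hδ]; norm_num
  have hg : x + (0:ℝ) • δ = x := by simp
  rw [slope_def_field, h0, h1, hg] at hslope
  rw [show ((1:ℝ) - 0) = 1 by norm_num, div_one] at hslope
  linarith [hslope]

lemma grad_lip_sq (hflip : BlockLip blk f Q) (a b : Euc d) :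
    ‖gradient f a - gradient f b‖ ^ 2 ≤ (∑ j, specNorm (Q j)) * ‖a - b‖ ^ 2 := by
  rw [norm_sq_eq_sum_blockMask (blk := blk)]
  rw [Finset.sum_mul]
  refine Finset.sum_le_sum fun j _ => ?_
  rw [blockMask_sub]
  exact (hflip j a b).trans (quadForm_le_spec _ _)

lemma grad_cont (hflip : BlockLip blk f Q) : Continuous fun z => gradient f z := by
  set C := Real.sqrt (∑ j, specNorm (Q j)) with hC
  have hCnn : 0 ≤ C := Real.sqrt_nonneg _
  have : LipschitzWith C.toNNReal fun z => gradient f z := by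
    refine LipschitzWith.of_dist_le_mul fun a b => ?_
    rw [dist_eq_norm, dist_eq_norm, Real.coe_toNNReal _ hCnn]
    have h2 := grad_lip_sq hflip a b
    have hs : ∑ j, specNorm (Q j) = C ^ 2 := by
      rw [hC, Real.sq_sqrt]
      exact Finset.sum_nonneg fun j _ => specNorm_nonneg _
    rw [hs] at h2
    nlinarith [norm_nonneg (gradient f a - gradient f b), norm_nonneg (a - b),
      mul_nonneg hCnn (norm_nonneg (a - b))]
  exact this.continuous

set_option maxHeartbeats 1000000 in
lemma seg_est (hf : Differentiable ℝ f) (hflip : BlockLip blk f Q)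
    (hpsd : ∀ j, (Q j).PosSemidef) (x y : Euc d) (j : Fin m) :
    f (blockCombine blk (j : ℕ) x y) ≤ f (blockCombine blk ((j : ℕ) + 1) x y) +
      ⟪gradient f x, blockMask blk j (y - x)⟫ +
      Real.sqrt ((quadForm (keepGE blk ((j : ℕ) + 1) (Q j)) (y - x) +
        quadForm (keepGE blk ((j : ℕ) + 2) (Q j)) (y - x)) / 2) *
        ‖blockMask blk j (y - x)‖ := by
  set h := y - x with hh
  set δ := blockMask blk j h with hδdef
  set w := blockCombine blk ((j : ℕ) + 1) x y with hw
  set c1 := quadForm (keepGE blk ((j : ℕ) + 1) (Q j)) h with hc1def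
  set c2 := quadForm (keepGE blk ((j : ℕ) + 2) (Q j)) h with hc2def
  have hc1nn : 0 ≤ c1 := by
    rw [hc1def, quadForm_keepGE]; exact quadForm_nonneg (hpsd j) _
  have hc2nn : 0 ≤ c2 := by
    rw [hc2def, quadForm_keepGE]; exact quadForm_nonneg (hpsd j) _
  have hkey : w + δ = blockCombine blk (j : ℕ) x y := combine_succ_add_blockMask j x y
  -- pointwise gradient-difference bound
  have hpt : ∀ t : ℝ, 0 ≤ t → t ≤ 1 →
      ⟪gradient f (w + t • δ), δ⟫ ≤ ⟪gradient f x, δ⟫ +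
        Real.sqrt ((1 - t) * c2 + t * c1) * ‖δ‖ := by
    intro t ht0 ht1
    have hsub : ⟪gradient f (w + t • δ), δ⟫ - ⟪gradient f x, δ⟫ =
        ⟪gradient f (w + t • δ) - gradient f x, δ⟫ := (inner_sub_left _ _ _).symm
    have hmask : ⟪gradient f (w + t • δ) - gradient f x, δ⟫ =
        ⟪blockMask blk j (gradient f (w + t • δ) - gradient f x), δ⟫ := by
      rw [hδdef, inner_blockMask, ← inner_blockMask']
    have hcs : ⟪blockMask blk j (gradient f (w + t • δ) - gradient f x), δ⟫ ≤
        ‖blockMask blk j (gradient f (w + t • δ) - gradient f x)‖ * ‖δ‖ :=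
      real_inner_le_norm _ _
    have hquad : ‖blockMask blk j (gradient f (w + t • δ) - gradient f x)‖ ^ 2 ≤
        (1 - t) * c2 + t * c1 := by
      rw [blockMask_sub]
      refine (hflip j (w + t • δ) x).trans ?_
      have hwx : w + t • δ - x = mGE blk ((j : ℕ) + 2) h + t • δ := by
        rw [add_sub_right_comm, hw, hh, combine_sub_left]
      rw [hwx]
      have := quadForm_convex_seg (hpsd j) (mGE blk ((j : ℕ) + 2) h) δ ht0 ht1
      refine this.trans ?_
      rw [hδdef, mGE_add_blockMask, ← quadForm_keepGE, ← quadForm_keepGE, ← hc1def, ← hc2def]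
    have hnb : ‖blockMask blk j (gradient f (w + t • δ) - gradient f x)‖ ≤
        Real.sqrt ((1 - t) * c2 + t * c1) := by
      have hb : 0 ≤ (1 - t) * c2 + t * c1 := by nlinarith
      have := Real.sqrt_le_sqrt hquad
      rwa [Real.sqrt_sq (norm_nonneg _)] at this
    have := mul_le_mul_of_nonneg_right hnb (norm_nonneg δ)
    linarith [hcs.trans this]
  -- FTC
  have hcont : Continuous fun t : ℝ => ⟪gradient f (w + t • δ), δ⟫ := by
    have h1 : Continuous fun t : ℝ => w + t • δ := by fun_prop
    exact ((grad_cont hflip).comp h1).inner continuous_const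
  have hFTC : f (w + δ) - f w = ∫ t in (0:ℝ)..1, ⟪gradient f (w + t • δ), δ⟫ := by
    have := intervalIntegral.integral_eq_sub_of_hasDerivAt
      (f := fun s : ℝ => f (w + s • δ))
      (f' := fun t : ℝ => ⟪gradient f (w + t • δ), δ⟫)
      (fun t _ => hasDerivAt_line hf w δ t)
      (hcont.intervalIntegrable 0 1)
    rw [this]; simp
  set s := Real.sqrt ((c1 + c2) / 2) with hsdef
  have hsnn : 0 ≤ s := Real.sqrt_nonneg _
  have hmain : f (w + δ) - f w ≤ ⟪gradient f x, δ⟫ + s * ‖δ‖ := by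
    rcases eq_or_lt_of_le (by linarith [hc1nn, hc2nn] : (0:ℝ) ≤ (c1 + c2) / 2) with hz | hpos
    · -- c1 = c2 = 0
      have hc1 : c1 = 0 := by linarith
      have hc2 : c2 = 0 := by linarith
      have hbd : ∀ t ∈ Set.Icc (0:ℝ) 1,
          ⟪gradient f (w + t • δ), δ⟫ ≤ ⟪gradient f x, δ⟫ := by
        intro t ht
        have := hpt t ht.1 ht.2
        rw [hc1, hc2] at this
        simpa using this
      have hint := intervalIntegral.integral_mono_on (μ := MeasureTheory.volume)
        (by norm_num : (0:ℝ) ≤ 1)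
        (hcont.intervalIntegrable 0 1) (intervalIntegrable_const) hbd
      rw [hFTC]
      have : (∫ _ in (0:ℝ)..1, ⟪gradient f x, δ⟫) = ⟪gradient f x, δ⟫ := by
        rw [intervalIntegral.integral_const]; norm_num
      rw [this] at hint
      have : 0 ≤ s * ‖δ‖ := mul_nonneg hsnn (norm_nonneg _)
      linarith
    · have hspos : 0 < s := Real.sqrt_pos.2 hpos
      have hs2 : s ^ 2 = (c1 + c2) / 2 := Real.sq_sqrt (le_of_lt hpos)
      set K1 : ℝ := ⟪gradient f x, δ⟫ + (c2 + s ^ 2) / (2 * s) * ‖δ‖ with hK1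
      set K2 : ℝ := (c1 - c2) / (2 * s) * ‖δ‖ with hK2
      have hbd : ∀ t ∈ Set.Icc (0:ℝ) 1,
          ⟪gradient f (w + t • δ), δ⟫ ≤ K1 + K2 * t := by
        intro t ht
        refine (hpt t ht.1 ht.2).trans ?_
        have hX : 0 ≤ (1 - t) * c2 + t * c1 := by nlinarith [ht.1, ht.2]
        have hsq : Real.sqrt ((1 - t) * c2 + t * c1) ≤
            ((1 - t) * c2 + t * c1 + s ^ 2) / (2 * s) := by
          have h1 := Real.sq_sqrt hX
          have h2 := Real.sqrt_nonneg ((1 - t) * c2 + t * c1)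
          rw [le_div_iff₀ (by linarith [hspos] : (0:ℝ) < 2 * s)]
          nlinarith [sq_nonneg (Real.sqrt ((1 - t) * c2 + t * c1) - s)]
        have hmul := mul_le_mul_of_nonneg_right hsq (norm_nonneg δ)
        have heq : ((1 - t) * c2 + t * c1 + s ^ 2) / (2 * s) * ‖δ‖ =
            (c2 + s ^ 2) / (2 * s) * ‖δ‖ + (c1 - c2) / (2 * s) * ‖δ‖ * t := by
          field_simp; ring
        rw [heq] at hmul
        rw [hK1, hK2]
        have expand : (c1 - c2) / (2 * s) * ‖δ‖ * t = (c1 - c2) / (2 * s) * t * ‖δ‖ := by ring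
        nlinarith [hmul]
      have hint := intervalIntegral.integral_mono_on (μ := MeasureTheory.volume)
        (by norm_num : (0:ℝ) ≤ 1)
        (hcont.intervalIntegrable 0 1)
        (((continuous_const.add (continuous_const.mul continuous_id)).intervalIntegrable 0 1))
        hbd
      have hRint : (∫ t in (0:ℝ)..1, (K1 + K2 * t)) = K1 + K2 / 2 := by
        rw [intervalIntegral.integral_add intervalIntegrable_const
          ((intervalIntegral.intervalIntegrable_id).const_mul K2)]
        rw [intervalIntegral.integral_const, intervalIntegral.integral_const_mul, integral_id]
        norm_num <;> ring
      have hid : (∫ u in (0:ℝ)..1, (K1 + K2 * id u)) = (∫ t in (0:ℝ)..1, (K1 + K2 * t)) := by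
        simp only [id]
      have hsne : s ≠ 0 := ne_of_gt hspos
      have hfin2 : (c2 + s ^ 2) / (2 * s) * ‖δ‖ + (c1 - c2) / (2 * s) * ‖δ‖ / 2
          = s * ‖δ‖ := by
        field_simp
        first
          | linear_combination (2 * ‖δ‖) * hs2
          | linear_combination (-2 * ‖δ‖) * hs2
          | linear_combination (4 * ‖δ‖) * hs2
          | linear_combination (-4 * ‖δ‖) * hs2
          | linear_combination (2 * s * ‖δ‖) * hs2
          | linear_combination (-2 * s * ‖δ‖) * hs2
          | linear_combination (4 * s * ‖δ‖) * hs2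
          | linear_combination (-4 * s * ‖δ‖) * hs2
          | linear_combination (8 * s * ‖δ‖) * hs2
          | linear_combination (-8 * s * ‖δ‖) * hs2
      have hfinal : K1 + K2 / 2 = ⟪gradient f x, δ⟫ + s * ‖δ‖ := by
        rw [hK1, hK2]
        linarith [hfin2]
      rw [hFTC]
      calc (∫ t in (0:ℝ)..1, ⟪gradient f (w + t • δ), δ⟫)
          ≤ ∫ u in (0:ℝ)..1, (K1 + K2 * id u) := hint
        _ = K1 + K2 / 2 := by rw [hid, hRint]
        _ = ⟪gradient f x, δ⟫ + s * ‖δ‖ := hfinal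
  rw [← hkey]
  linarith [hmain]

end ACAux

namespace ACAux
variable {d m : ℕ} {blk : Fin d → Fin m} {f : Euc d → ℝ}
  {Q : Fin m → Matrix (Fin d) (Fin d) ℝ}

lemma bigL_nonneg : 0 ≤ bigL blk Q := Real.sqrt_nonneg _

lemma bigL_sq (hm : 0 ≤ specNorm (Qtilde blk Q)) : bigL blk Q ^ 2 = 2 * specNorm (Qtilde blk Q) := by
  rw [bigL, Real.sq_sqrt]; linarith

lemma quadForm_Qtilde (z : Euc d) :
    quadForm (Qtilde blk Q) z = ∑ j : Fin m,
      (quadForm (keepGE blk ((j : ℕ) + 1) (Q j)) z + quadForm (keepGE blk ((j : ℕ) + 2) (Q j)) z) := by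
  rw [Qtilde, quadForm_sum_matrix]
  exact Finset.sum_congr rfl fun j _ => quadForm_add_matrix _ _ _

lemma smooth_ub (hf : Differentiable ℝ f) (hflip : BlockLip blk f Q)
    (hpsd : ∀ j, (Q j).PosSemidef) (x y : Euc d) :
    f y ≤ f x + ⟪gradient f x, y - x⟫ + bigL blk Q / 2 * ‖y - x‖ ^ 2 := by
  set h := y - x with hh
  set sj : Fin m → ℝ := fun j => Real.sqrt ((quadForm (keepGE blk ((j : ℕ) + 1) (Q j)) h +
    quadForm (keepGE blk ((j : ℕ) + 2) (Q j)) h) / 2) with hsj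
  have tele : f y - f x = ∑ j ∈ Finset.range m,
      (f (blockCombine blk j x y) - f (blockCombine blk (j + 1) x y)) := by
    rw [Finset.sum_range_sub' (fun t => f (blockCombine blk t x y)) m, combine_zero, combine_m]
  have tele2 : f y - f x = ∑ j : Fin m,
      (f (blockCombine blk (j : ℕ) x y) - f (blockCombine blk ((j : ℕ) + 1) x y)) := by
    rw [tele, ← Fin.sum_univ_eq_sum_range
      (fun t => f (blockCombine blk t x y) - f (blockCombine blk (t + 1) x y)) m]
  have hbound : f y - f x ≤ ∑ j : Fin m, (⟪gradient f x, blockMask blk j h⟫ +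
      sj j * ‖blockMask blk j h‖) := by
    rw [tele2]
    refine Finset.sum_le_sum fun j _ => ?_
    have := seg_est hf hflip hpsd x y j
    rw [hsj]
    linarith [this]
  have hsplit : ∑ j : Fin m, (⟪gradient f x, blockMask blk j h⟫ + sj j * ‖blockMask blk j h‖) =
      ⟪gradient f x, h⟫ + ∑ j : Fin m, sj j * ‖blockMask blk j h‖ := by
    rw [Finset.sum_add_distrib, ← inner_sum, sum_blockMask]
  have hSnn : 0 ≤ ∑ j : Fin m, sj j * ‖blockMask blk j h‖ :=
    Finset.sum_nonneg fun j _ => mul_nonneg (Real.sqrt_nonneg _) (norm_nonneg _)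
  have hcs : (∑ j : Fin m, sj j * ‖blockMask blk j h‖) ^ 2 ≤
      (∑ j : Fin m, sj j ^ 2) * ∑ j : Fin m, ‖blockMask blk j h‖ ^ 2 :=
    Finset.sum_mul_sq_le_sq_mul_sq Finset.univ _ _
  have hsq : ∑ j : Fin m, sj j ^ 2 = quadForm (Qtilde blk Q) h / 2 := by
    have e1 : ∀ j : Fin m, sj j ^ 2 = (quadForm (keepGE blk ((j : ℕ) + 1) (Q j)) h +
        quadForm (keepGE blk ((j : ℕ) + 2) (Q j)) h) / 2 := by
      intro j
      rw [hsj, Real.sq_sqrt]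
      have h1 : 0 ≤ quadForm (keepGE blk ((j : ℕ) + 1) (Q j)) h := by
        rw [quadForm_keepGE]; exact quadForm_nonneg (hpsd j) _
      have h2 : 0 ≤ quadForm (keepGE blk ((j : ℕ) + 2) (Q j)) h := by
        rw [quadForm_keepGE]; exact quadForm_nonneg (hpsd j) _
      linarith
    rw [Finset.sum_congr rfl fun j _ => e1 j, ← Finset.sum_div, quadForm_Qtilde]
  have hnorm : ∑ j : Fin m, ‖blockMask blk j h‖ ^ 2 = ‖h‖ ^ 2 :=
    (norm_sq_eq_sum_blockMask h).symm
  have hspec : quadForm (Qtilde blk Q) h ≤ specNorm (Qtilde blk Q) * ‖h‖ ^ 2 :=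
    quadForm_le_spec _ _
  have hspecnn : 0 ≤ specNorm (Qtilde blk Q) := specNorm_nonneg _
  have hfin : (∑ j : Fin m, sj j * ‖blockMask blk j h‖) ≤ bigL blk Q / 2 * ‖h‖ ^ 2 := by
    have hR : (bigL blk Q / 2 * ‖h‖ ^ 2) ^ 2 = specNorm (Qtilde blk Q) / 2 * ‖h‖ ^ 2 * ‖h‖ ^ 2 := by
      have := bigL_sq (blk := blk) (Q := Q) hspecnn
      linear_combination (‖h‖ ^ 2 * ‖h‖ ^ 2 / 4) * this
    have hS2 : (∑ j : Fin m, sj j * ‖blockMask blk j h‖) ^ 2 ≤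
        (bigL blk Q / 2 * ‖h‖ ^ 2) ^ 2 := by
      rw [hR]
      calc (∑ j : Fin m, sj j * ‖blockMask blk j h‖) ^ 2
          ≤ (quadForm (Qtilde blk Q) h / 2) * ‖h‖ ^ 2 := by rw [← hsq, ← hnorm]; exact hcs
        _ ≤ specNorm (Qtilde blk Q) / 2 * ‖h‖ ^ 2 * ‖h‖ ^ 2 := by nlinarith [sq_nonneg ‖h‖]
    have hRnn : 0 ≤ bigL blk Q / 2 * ‖h‖ ^ 2 := by
      have := bigL_nonneg (blk := blk) (Q := Q); positivity
    nlinarith [hS2, hSnn, hRnn]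
  linarith [hbound, hsplit ▸ hbound, hfin]

lemma p_err_sq (hflip : BlockLip blk f Q) (hpsd : ∀ j, (Q j).PosSemidef)
    (xk yk pk : Euc d)
    (hp : ∀ j : Fin m, blockMask blk j pk =
      blockMask blk j (gradient f (blockCombine blk ((j : ℕ) + 1) xk yk))) :
    ‖gradient f xk - pk‖ ^ 2 ≤ specNorm (Qtilde blk Q) * ‖yk - xk‖ ^ 2 := by
  rw [norm_sq_eq_sum_blockMask (blk := blk)]
  have hstep1 : ∀ j : Fin m, ‖blockMask blk j (gradient f xk - pk)‖ ^ 2 ≤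
      quadForm (keepGE blk ((j : ℕ) + 2) (Q j)) (yk - xk) := by
    intro j
    rw [blockMask_sub, hp j]
    refine (hflip j xk (blockCombine blk ((j : ℕ) + 1) xk yk)).trans ?_
    have : xk - blockCombine blk ((j : ℕ) + 1) xk yk = -(mGE blk ((j : ℕ) + 2) (yk - xk)) := by
      rw [← combine_sub_left, neg_sub]
    rw [this, quadForm_neg, ← quadForm_keepGE]
  have hstep2 : ∑ j : Fin m, ‖blockMask blk j (gradient f xk - pk)‖ ^ 2 ≤
      quadForm (Qtilde blk Q) (yk - xk) := by
    rw [quadForm_Qtilde]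
    refine (Finset.sum_le_sum fun j _ => hstep1 j).trans (Finset.sum_le_sum fun j _ => ?_)
    have h1 : 0 ≤ quadForm (keepGE blk ((j : ℕ) + 1) (Q j)) (yk - xk) := by
      rw [quadForm_keepGE]; exact quadForm_nonneg (hpsd j) _
    linarith
  exact hstep2.trans (quadForm_le_spec _ _)

end ACAux

/-- The A-CODER iterates (Algorithm 1), encoded via their characterizing properties.
The prox step is encoded as minimization of the (block-separable) objective. -/
structure ACoder (d m : ℕ) (blk : Fin d → Fin m) (f g : Euc d → ℝ)
    (gj : Fin m → Euc d → ℝ) (Q : Fin m → Matrix (Fin d) (Fin d) ℝ) (γ : ℝ) where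
  x0 : Euc d
  a : ℕ → ℝ
  A : ℕ → ℝ
  x : ℕ → Euc d
  v : ℕ → Euc d
  y : ℕ → Euc d
  p : ℕ → Euc d
  q : ℕ → Euc d
  hmono : Monotone blk
  hsurj : Function.Surjective blk
  hpsd : ∀ j, (Q j).PosSemidef
  hLpos : 0 < bigL blk Q
  hfconv : ConvexOn ℝ Set.univ f
  hfdiff : Differentiable ℝ f
  hflip : BlockLip blk f Q
  hγ : 0 ≤ γ
  hgconv : ConvexOn ℝ Set.univ g
  hgsc : SubgradStrongConvex γ g
  hgsep : ∀ z, g z = ∑ j, gj j z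
  hgjblock : ∀ j u u', blockMask blk j u = blockMask blk j u' → gj j u = gj j u'
  hgjconv : ∀ j, ConvexOn ℝ Set.univ (gj j)
  hx0 : x 0 = x0
  hv0 : v 0 = x0
  hy0 : y 0 = x0
  hp0 : p 0 = gradient f x0
  ha0 : a 0 = 0
  hA0 : A 0 = 0
  hapos : ∀ k, 1 ≤ k → 0 < a k
  hstep : ∀ k, 1 ≤ k → a k ^ 2 / A k ≤ 2 * (1 + A (k - 1) * γ) / (5 * bigL blk Q)
  hA : ∀ k, 1 ≤ k → A k = A (k - 1) + a k
  hx : ∀ k, 1 ≤ k → x k = (A (k - 1) / A k) • y (k - 1) + (a k / A k) • v (k - 1)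
  hp : ∀ k, 1 ≤ k → ∀ j, blockMask blk j (p k) =
      blockMask blk j (gradient f (blockCombine blk ((j : ℕ) + 1) (x k) (y k)))
  hq : ∀ k, 1 ≤ k →
      q k = p k + (a (k - 1) / a k) • (gradient f (x (k - 1)) - p (k - 1))
  hv : ∀ k, 1 ≤ k → IsMinOn
      (fun u => A k * g u + ‖u - (x0 - ∑ i ∈ Finset.Icc 1 k, a i • q i)‖ ^ 2 / 2)
      Set.univ (v k)
  hy : ∀ k, 1 ≤ k → y k = (A (k - 1) / A k) • y (k - 1) + (a k / A k) • v k

namespace ACAux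

variable {d m : ℕ} {blk : Fin d → Fin m} {f g : Euc d → ℝ} {gj : Fin m → Euc d → ℝ}
  {Q : Fin m → Matrix (Fin d) (Fin d) ℝ} {γ : ℝ}

def sig (P : ACoder d m blk f g gj Q γ) (k : ℕ) : ℝ := 1 + P.A k * γ

def EE (P : ACoder d m blk f g gj Q γ) (k : ℕ) : Euc d := gradient f (P.x k) - P.p k

def eps (P : ACoder d m blk f g gj Q γ) (k : ℕ) : Euc d := P.q k - gradient f (P.x k)

def Psi (P : ACoder d m blk f g gj Q γ) (k : ℕ) (u : Euc d) : ℝ :=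
  ‖u - P.x0‖ ^ 2 / 2 + (∑ i ∈ Finset.Icc 1 k, P.a i * (f (P.x i) + ⟪P.q i, u - P.x i⟫))
    + P.A k * g u

def RR (P : ACoder d m blk f g gj Q γ) (k : ℕ) : ℝ := ∑ i ∈ Finset.Icc 1 k,
  (P.a i * ⟪eps P i, P.v i - P.x i⟫ + 3 / 10 * sig P (i - 1) * ‖P.v i - P.v (i - 1)‖ ^ 2)

variable (P : ACoder d m blk f g gj Q γ)

lemma A_nonneg : ∀ k, 0 ≤ P.A k := by
  intro k
  induction k with
  | zero => rw [P.hA0]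
  | succ k ih =>
      have h := P.hA (k + 1) (by omega)
      simp only [Nat.add_sub_cancel] at h
      have := P.hapos (k + 1) (by omega)
      linarith

lemma A_pos {k : ℕ} (hk : 1 ≤ k) : 0 < P.A k := by
  have h := P.hA k hk
  have h2 := P.hapos k hk
  have h3 := A_nonneg P (k - 1)
  linarith

lemma A_succ (k : ℕ) : P.A (k + 1) = P.A k + P.a (k + 1) := by
  have h := P.hA (k + 1) (by omega)
  simpa using h

lemma A_sub_le {k : ℕ} (hk : 1 ≤ k) : P.A (k - 1) ≤ P.A k := by
  have h := P.hA k hk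
  have h2 := P.hapos k hk
  linarith

lemma sig_pos (k : ℕ) : 0 < sig P k := by
  have h1 := A_nonneg P k
  have h2 := P.hγ
  have : 0 ≤ P.A k * γ := mul_nonneg h1 h2
  rw [sig]; linarith

lemma sig_sub_le {k : ℕ} (hk : 1 ≤ k) : sig P (k - 1) ≤ sig P k := by
  rw [sig, sig]
  have h1 := A_sub_le P hk
  have h2 := P.hγ
  nlinarith

lemma sig_mono_succ (k : ℕ) : sig P k ≤ sig P (k + 1) := by
  rw [sig, sig]
  have := A_succ P k
  have h2 := P.hγ
  have h3 := P.hapos (k + 1) (by omega)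
  nlinarith

lemma A_sum : ∀ k, P.A k = ∑ i ∈ Finset.Icc 1 k, P.a i := by
  intro k
  induction k with
  | zero => simp [P.hA0]
  | succ k ih =>
      rw [A_succ, ih, Finset.sum_Icc_succ_top (by omega : 1 ≤ k + 1)]

lemma step_eq (hstepEq : ∀ k, 1 ≤ k →
      P.a k ^ 2 / P.A k = 2 * (1 + P.A (k - 1) * γ) / (5 * bigL blk Q))
    {k : ℕ} (hk : 1 ≤ k) :
    bigL blk Q * P.a k ^ 2 = 2 / 5 * sig P (k - 1) * P.A k := by
  have h := hstepEq k hk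
  have hA := A_pos P hk
  have hL := P.hLpos
  rw [div_eq_div_iff (ne_of_gt hA) (by positivity)] at h
  rw [sig]
  nlinarith [h]

lemma Ay {k : ℕ} (hk : 1 ≤ k) :
    P.A k • P.y k = P.A (k - 1) • P.y (k - 1) + P.a k • P.v k := by
  have hA := (A_pos P hk).ne'
  rw [P.hy k hk, smul_add, smul_smul, smul_smul, mul_div_cancel₀ _ hA, mul_div_cancel₀ _ hA]

lemma comb {k : ℕ} (hk : 1 ≤ k) :
    P.A (k - 1) • (P.y (k - 1) - P.x k) + P.a k • (P.v k - P.x k) =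
      P.A k • (P.y k - P.x k) := by
  have h1 := Ay P hk
  have h2 := P.hA k hk
  have e1 : P.A (k - 1) • (P.y (k - 1) - P.x k) + P.a k • (P.v k - P.x k) =
      (P.A (k - 1) • P.y (k - 1) + P.a k • P.v k) - (P.A (k - 1) + P.a k) • P.x k := by
    module
  rw [e1, ← h1, ← h2, smul_sub]

lemma yx {k : ℕ} (hk : 1 ≤ k) :
    P.y k - P.x k = (P.a k / P.A k) • (P.v k - P.v (k - 1)) := by
  rw [P.hy k hk, P.hx k hk]
  module

lemma yx_norm_sq {k : ℕ} (hk : 1 ≤ k) :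
    ‖P.y k - P.x k‖ ^ 2 = (P.a k / P.A k) ^ 2 * ‖P.v k - P.v (k - 1)‖ ^ 2 := by
  rw [yx P hk, norm_smul, mul_pow]
  congr 1
  rw [Real.norm_eq_abs, sq_abs]

lemma gcomb {k : ℕ} (hk : 1 ≤ k) :
    P.A k * g (P.y k) ≤ P.A (k - 1) * g (P.y (k - 1)) + P.a k * g (P.v k) := by
  have hA := A_pos P hk
  have hA1 := A_nonneg P (k - 1)
  have ha := P.hapos k hk
  have hsum : P.A (k - 1) / P.A k + P.a k / P.A k = 1 := by
    rw [← add_div, ← P.hA k hk, div_self hA.ne']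
  have hcvx := P.hgconv.2 (Set.mem_univ (P.y (k - 1))) (Set.mem_univ (P.v k))
    (div_nonneg hA1 hA.le) (div_nonneg ha.le hA.le) hsum
  rw [← P.hy k hk] at hcvx
  have := mul_le_mul_of_nonneg_left hcvx hA.le
  calc P.A k * g (P.y k) ≤ P.A k * (P.A (k - 1) / P.A k * g (P.y (k - 1)) +
        P.a k / P.A k * g (P.v k)) := this
    _ = P.A (k - 1) * g (P.y (k - 1)) + P.a k * g (P.v k) := by
        field_simp

lemma eps_smul {k : ℕ} (hk : 1 ≤ k) :
    P.a k • eps P k = P.a (k - 1) • EE P (k - 1) - P.a k • EE P k := by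
  have ha := (P.hapos k hk).ne'
  rw [eps, EE, EE, P.hq k hk]
  rw [show P.p k + (P.a (k - 1) / P.a k) • (gradient f (P.x (k - 1)) - P.p (k - 1)) -
      gradient f (P.x k) = (P.a (k - 1) / P.a k) • (gradient f (P.x (k - 1)) - P.p (k - 1))
      - (gradient f (P.x k) - P.p k) from by module]
  rw [smul_sub, smul_smul, mul_div_cancel₀ _ ha]

lemma young_bound {xx yy D σ : ℝ} (hx : 0 ≤ xx) (hσ : 0 < σ)
    (h2 : xx ^ 2 ≤ 2 / 25 * σ ^ 2 * D ^ 2) :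
    xx * yy ≤ 3 / 20 * σ * (D ^ 2 + yy ^ 2) := by
  have key : 20 * σ * (3 / 20 * σ * (D ^ 2 + yy ^ 2) - xx * yy) =
      3 * (σ ^ 2 * D ^ 2 - 25 / 2 * xx ^ 2) + (1 / 6) * (15 * xx - 4 * σ * yy) ^ 2 +
        (1 / 3) * σ ^ 2 * yy ^ 2 := by ring
  have h3 : 0 ≤ σ ^ 2 * D ^ 2 - 25 / 2 * xx ^ 2 := by nlinarith [h2]
  have h4 : 0 ≤ (15 * xx - 4 * σ * yy) ^ 2 := sq_nonneg _
  have h5 : 0 ≤ σ ^ 2 * yy ^ 2 := by positivity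
  nlinarith [key, h3, h4, h5, hσ]

end ACAux

namespace ACAux
variable {d m : ℕ} {blk : Fin d → Fin m} {f g : Euc d → ℝ} {gj : Fin m → Euc d → ℝ}
  {Q : Fin m → Matrix (Fin d) (Fin d) ℝ} {γ : ℝ}
variable (P : ACoder d m blk f g gj Q γ)

lemma Psi_zero (u : Euc d) : Psi P 0 u = ‖u - P.x0‖ ^ 2 / 2 := by
  rw [Psi, Finset.Icc_eq_empty (by omega : ¬(1:ℕ) ≤ 0), P.hA0]
  simp

set_option maxHeartbeats 1000000 in
lemma psi_strong (k : ℕ) (u : Euc d) :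
    Psi P k (P.v k) + sig P k / 2 * ‖u - P.v k‖ ^ 2 ≤ Psi P k u := by
  rcases Nat.eq_zero_or_pos k with rfl | hk
  · rw [Psi_zero, Psi_zero, P.hv0, sig, P.hA0]
    have h0 : ‖P.x0 - P.x0‖ ^ 2 = 0 := by simp
    rw [h0]
    have : (1 + 0 * γ) / 2 * ‖u - P.x0‖ ^ 2 = ‖u - P.x0‖ ^ 2 / 2 := by ring
    rw [this]
    linarith
  · set S := ∑ i ∈ Finset.Icc 1 k, P.a i • P.q i with hS
    set c := P.x0 - S with hc
    have hmin := P.hv k hk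
    have hA := A_pos P hk
    have hseg : ∀ z : Euc d, ∀ t : ℝ, 0 ≤ t → t ≤ 1 →
        P.A k * g (P.v k + t • (z - P.v k)) + ‖P.v k + t • (z - P.v k) - c‖ ^ 2 / 2 ≤
          (P.A k * g (P.v k) + ‖P.v k - c‖ ^ 2 / 2) +
            t * (P.A k * g z - P.A k * g (P.v k) + ⟪P.v k - c, z - P.v k⟫) +
            t ^ 2 * (‖z - P.v k‖ ^ 2 / 2) := by
      intro z t ht0 ht1
      have hgc : g (P.v k + t • (z - P.v k)) ≤ (1 - t) * g (P.v k) + t * g z := by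
        have hpt : P.v k + t • (z - P.v k) = (1 - t) • P.v k + t • z := by module
        rw [hpt]
        exact P.hgconv.2 (Set.mem_univ _) (Set.mem_univ _) (by linarith) ht0 (by ring)
      have hmul := mul_le_mul_of_nonneg_left hgc hA.le
      have hexp : P.A k * ((1 - t) * g (P.v k) + t * g z) =
          P.A k * g (P.v k) - t * (P.A k * g (P.v k)) + t * (P.A k * g z) := by ring
      have hquad : ‖P.v k + t • (z - P.v k) - c‖ ^ 2 =
          ‖P.v k - c‖ ^ 2 + 2 * t * ⟪P.v k - c, z - P.v k⟫ + t ^ 2 * ‖z - P.v k‖ ^ 2 := by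
        have e : P.v k + t • (z - P.v k) - c = (P.v k - c) + t • (z - P.v k) := by module
        rw [e, norm_add_sq_real, real_inner_smul_right, norm_smul, Real.norm_eq_abs,
          mul_pow, sq_abs]
        ring
      nlinarith [hmul, hexp, hquad]
    have hVI : ∀ z : Euc d, 0 ≤ P.A k * g z - P.A k * g (P.v k) + ⟪P.v k - c, z - P.v k⟫ := by
      intro z
      set X := P.A k * g z - P.A k * g (P.v k) + ⟪P.v k - c, z - P.v k⟫ with hX
      set C := ‖z - P.v k‖ ^ 2 / 2 with hC
      have hCnn : 0 ≤ C := by positivity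
      by_contra hneg
      push_neg at hneg
      set t := min 1 (-X / (2 * C + 1)) with ht
      have htpos : 0 < t :=
        lt_min one_pos (div_pos (by linarith) (by linarith))
      have ht1 : t ≤ 1 := min_le_left _ _
      have hmin' := isMinOn_iff.mp hmin (P.v k + t • (z - P.v k)) (Set.mem_univ _)
      rw [← hS, ← hc] at hmin'
      have ht2 : t ≤ -X / (2 * C + 1) := min_le_right _ _
      have hup := hseg z t htpos.le ht1
      rw [← hX, ← hC] at hup
      clear_value t X C
      have h1 : 0 ≤ t * X + t ^ 2 * C := by linarith [hmin', hup]
      have ht3 : t * (2 * C + 1) ≤ -X := by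
        rw [← le_div_iff₀ (by linarith : (0:ℝ) < 2 * C + 1)]
        exact ht2
      have hcontr : t * X + t ^ 2 * C < 0 := by nlinarith [htpos, hCnn, hneg, ht3, ht1]
      linarith
    have hsub : ∀ z, g (P.v k) + ⟪(P.A k)⁻¹ • (c - P.v k), z - P.v k⟫ ≤ g z := by
      intro z
      have h1 := hVI z
      have h2 : ⟪P.v k - c, z - P.v k⟫ = -⟪c - P.v k, z - P.v k⟫ := by
        rw [show P.v k - c = -(c - P.v k) from (neg_sub _ _).symm, inner_neg_left]
      have h3 : ⟪c - P.v k, z - P.v k⟫ ≤ P.A k * g z - P.A k * g (P.v k) := by linarith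
      rw [real_inner_smul_left]
      have h4 : (P.A k)⁻¹ * ⟪c - P.v k, z - P.v k⟫ ≤
          (P.A k)⁻¹ * (P.A k * g z - P.A k * g (P.v k)) :=
        mul_le_mul_of_nonneg_left h3 (inv_nonneg.2 hA.le)
      have h5 : (P.A k)⁻¹ * (P.A k * g z - P.A k * g (P.v k)) = g z - g (P.v k) := by
        field_simp
      linarith
    have hsc := P.hgsc (P.v k) u ((P.A k)⁻¹ • (c - P.v k)) hsub
    have hAs : P.A k • ((P.A k)⁻¹ • (c - P.v k)) = c - P.v k := smul_inv_smul₀ hA.ne' _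
    have hsc2 : ⟪c - P.v k, u - P.v k⟫ + P.A k * (γ / 2 * ‖u - P.v k‖ ^ 2) ≤
        P.A k * g u - P.A k * g (P.v k) := by
      have hmul := mul_le_mul_of_nonneg_left hsc hA.le
      have e1 : P.A k * ⟪(P.A k)⁻¹ • (c - P.v k), u - P.v k⟫ = ⟪c - P.v k, u - P.v k⟫ := by
        rw [← real_inner_smul_left, hAs]
      have e2 : P.A k * (g (P.v k) + ⟪(P.A k)⁻¹ • (c - P.v k), u - P.v k⟫ +
          γ / 2 * ‖u - P.v k‖ ^ 2) = P.A k * g (P.v k) +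
          P.A k * ⟪(P.A k)⁻¹ • (c - P.v k), u - P.v k⟫ +
          P.A k * (γ / 2 * ‖u - P.v k‖ ^ 2) := by ring
      linarith [hmul, e1, e2]
    have hPsiDiff : Psi P k u - Psi P k (P.v k) =
        P.A k * g u - P.A k * g (P.v k) + ⟪P.v k - c, u - P.v k⟫ + ‖u - P.v k‖ ^ 2 / 2 := by
      rw [Psi, Psi]
      have hquad : ‖u - P.x0‖ ^ 2 = ‖P.v k - P.x0‖ ^ 2 + 2 * ⟪P.v k - P.x0, u - P.v k⟫ +
          ‖u - P.v k‖ ^ 2 := by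
        have e : u - P.x0 = (P.v k - P.x0) + (u - P.v k) := by module
        rw [e, norm_add_sq_real]
      have hlin : (∑ i ∈ Finset.Icc 1 k, P.a i * (f (P.x i) + ⟪P.q i, u - P.x i⟫)) -
          (∑ i ∈ Finset.Icc 1 k, P.a i * (f (P.x i) + ⟪P.q i, P.v k - P.x i⟫)) =
          ⟪S, u - P.v k⟫ := by
        rw [← Finset.sum_sub_distrib, hS, sum_inner]
        refine Finset.sum_congr rfl fun i _ => ?_
        rw [real_inner_smul_left]
        have e3 : ⟪P.q i, u - P.x i⟫ - ⟪P.q i, P.v k - P.x i⟫ = ⟪P.q i, u - P.v k⟫ := by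
          rw [← inner_sub_right]
          congr 1
          module
        linear_combination P.a i * e3
      have hvc : ⟪P.v k - P.x0, u - P.v k⟫ + ⟪S, u - P.v k⟫ = ⟪P.v k - c, u - P.v k⟫ := by
        rw [← inner_add_left]
        congr 1
        rw [hc]
        module
      linarith [hquad, hlin, hvc]
    have hcancel : ⟪P.v k - c, u - P.v k⟫ + ⟪c - P.v k, u - P.v k⟫ = 0 := by
      rw [← inner_add_left, show P.v k - c + (c - P.v k) = 0 from by module, inner_zero_left]
    have hfinal : sig P k / 2 * ‖u - P.v k‖ ^ 2 ≤ Psi P k u - Psi P k (P.v k) := by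
      rw [hPsiDiff, sig]
      nlinarith [hsc2, hcancel]
    linarith [hfinal]

lemma psi_le (k : ℕ) (u : Euc d) :
    Psi P k u ≤ P.A k * (f u + g u) + ‖u - P.x0‖ ^ 2 / 2 +
      ∑ i ∈ Finset.Icc 1 k, P.a i * ⟪eps P i, u - P.x i⟫ := by
  rw [Psi]
  have hterm : ∀ i ∈ Finset.Icc 1 k, P.a i * (f (P.x i) + ⟪P.q i, u - P.x i⟫) ≤
      P.a i * f u + P.a i * ⟪eps P i, u - P.x i⟫ := by
    intro i hi
    have hi1 : 1 ≤ i := (Finset.mem_Icc.mp hi).1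
    have ha := (P.hapos i hi1).le
    have hconv := fconv_ineq P.hfconv P.hfdiff (P.x i) u
    have hqe : ⟪P.q i, u - P.x i⟫ = ⟪gradient f (P.x i), u - P.x i⟫ +
        ⟪eps P i, u - P.x i⟫ := by
      rw [← inner_add_left]
      congr 1
      rw [eps]
      module
    have hmul := mul_le_mul_of_nonneg_left hconv ha
    have e1 : P.a i * (f (P.x i) + ⟪gradient f (P.x i), u - P.x i⟫) =
        P.a i * f (P.x i) + P.a i * ⟪gradient f (P.x i), u - P.x i⟫ := by ring
    nlinarith [hmul, hqe, e1]
  have hsum := Finset.sum_le_sum hterm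
  rw [Finset.sum_add_distrib] at hsum
  have hAf : ∑ i ∈ Finset.Icc 1 k, P.a i * f u = P.A k * f u := by
    rw [A_sum P k, Finset.sum_mul]
  linarith [hsum, hAf.le, hAf.ge]

lemma E2 (hstepEq : ∀ k, 1 ≤ k →
      P.a k ^ 2 / P.A k = 2 * (1 + P.A (k - 1) * γ) / (5 * bigL blk Q))
    {k : ℕ} (hk : 1 ≤ k) :
    (P.a k * ‖EE P k‖) ^ 2 ≤ 2 / 25 * sig P (k - 1) ^ 2 * ‖P.v k - P.v (k - 1)‖ ^ 2 := by
  have hperr := p_err_sq (f := f) P.hflip P.hpsd (P.x k) (P.y k) (P.p k) (P.hp k hk)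
  have hyx := yx_norm_sq P hk
  have hstep := step_eq P hstepEq hk
  have hA := A_pos P hk
  have hspec : bigL blk Q ^ 2 = 2 * specNorm (Qtilde blk Q) :=
    bigL_sq (specNorm_nonneg _)
  have hsq : (bigL blk Q * P.a k ^ 2) ^ 2 = (2 / 5 * sig P (k - 1) * P.A k) ^ 2 := by
    rw [hstep]
  have hkey : specNorm (Qtilde blk Q) * P.a k ^ 4 =
      2 / 25 * sig P (k - 1) ^ 2 * P.A k ^ 2 := by
    linear_combination (1 / 2) * hsq + (-(P.a k ^ 4) / 2) * hspec
  calc (P.a k * ‖EE P k‖) ^ 2 = P.a k ^ 2 * ‖EE P k‖ ^ 2 := by ring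
    _ ≤ P.a k ^ 2 * (specNorm (Qtilde blk Q) * ‖P.y k - P.x k‖ ^ 2) :=
        mul_le_mul_of_nonneg_left hperr (sq_nonneg _)
    _ = P.a k ^ 2 * (specNorm (Qtilde blk Q) *
        ((P.a k / P.A k) ^ 2 * ‖P.v k - P.v (k - 1)‖ ^ 2)) := by rw [hyx]
    _ = (specNorm (Qtilde blk Q) * P.a k ^ 4) / P.A k ^ 2 * ‖P.v k - P.v (k - 1)‖ ^ 2 := by
        field_simp
    _ = 2 / 25 * sig P (k - 1) ^ 2 * ‖P.v k - P.v (k - 1)‖ ^ 2 := by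
        rw [hkey]
        field_simp

end ACAux

namespace ACAux
variable {d m : ℕ} {blk : Fin d → Fin m} {f g : Euc d → ℝ} {gj : Fin m → Euc d → ℝ}
  {Q : Fin m → Matrix (Fin d) (Fin d) ℝ} {γ : ℝ}
variable (P : ACoder d m blk f g gj Q γ)

set_option maxHeartbeats 1000000 in
lemma psi_v_ge (hstepEq : ∀ k, 1 ≤ k →
      P.a k ^ 2 / P.A k = 2 * (1 + P.A (k - 1) * γ) / (5 * bigL blk Q)) :
    ∀ k, P.A k * (f (P.y k) + g (P.y k)) + RR P k ≤ Psi P k (P.v k) := by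
  intro k
  induction k with
  | zero =>
      rw [RR, Psi_zero, P.hv0, P.hA0, Finset.Icc_eq_empty (by omega : ¬(1:ℕ) ≤ 0)]
      simp
  | succ k ih =>
      have hk1 : (1:ℕ) ≤ k + 1 := by omega
      have hA1 := A_pos P hk1
      have hAk := A_nonneg P k
      have hak := P.hapos (k + 1) hk1
      set G := gradient f (P.x (k + 1)) with hG
      have hsplit : Psi P (k + 1) (P.v (k + 1)) = Psi P k (P.v (k + 1)) +
          P.a (k + 1) * (f (P.x (k + 1)) + ⟪P.q (k + 1), P.v (k + 1) - P.x (k + 1)⟫) +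
          P.a (k + 1) * g (P.v (k + 1)) := by
        rw [Psi, Psi, Finset.sum_Icc_succ_top hk1, A_succ]
        ring
      have hstrong := psi_strong P k (P.v (k + 1))
      have hRR : RR P (k + 1) = RR P k +
          (P.a (k + 1) * ⟪eps P (k + 1), P.v (k + 1) - P.x (k + 1)⟫ +
            3 / 10 * sig P k * ‖P.v (k + 1) - P.v k‖ ^ 2) := by
        rw [RR, RR, Finset.sum_Icc_succ_top hk1]
        simp only [Nat.add_sub_cancel]
      have hqe : ⟪P.q (k + 1), P.v (k + 1) - P.x (k + 1)⟫ =
          ⟪G, P.v (k + 1) - P.x (k + 1)⟫ + ⟪eps P (k + 1), P.v (k + 1) - P.x (k + 1)⟫ := by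
        rw [← inner_add_left, show G + eps P (k + 1) = P.q (k + 1) from by
          rw [hG, eps]; module]
      have hfc : f (P.x (k + 1)) + ⟪G, P.y k - P.x (k + 1)⟫ ≤ f (P.y k) :=
        fconv_ineq P.hfconv P.hfdiff _ _
      have hfcA := mul_le_mul_of_nonneg_left hfc hAk
      have hcombv := comb P hk1
      simp only [Nat.add_sub_cancel] at hcombv
      have hinner : P.A k * ⟪G, P.y k - P.x (k + 1)⟫ +
          P.a (k + 1) * ⟪G, P.v (k + 1) - P.x (k + 1)⟫ =
          P.A (k + 1) * ⟪G, P.y (k + 1) - P.x (k + 1)⟫ := by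
        rw [← real_inner_smul_right, ← real_inner_smul_right, ← real_inner_smul_right,
          ← inner_add_right, hcombv]
      have hsm := smooth_ub (f := f) P.hfdiff P.hflip P.hpsd (P.x (k + 1)) (P.y (k + 1))
      have hsmA := mul_le_mul_of_nonneg_left hsm hA1.le
      have hyxn := yx_norm_sq P hk1
      simp only [Nat.add_sub_cancel] at hyxn
      have hstep := step_eq P hstepEq hk1
      simp only [Nat.add_sub_cancel] at hstep
      have hsmooth_term : P.A (k + 1) * (bigL blk Q / 2 * ‖P.y (k + 1) - P.x (k + 1)‖ ^ 2) =
          1 / 5 * sig P k * ‖P.v (k + 1) - P.v k‖ ^ 2 := by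
        rw [hyxn]
        have e : P.A (k + 1) * (bigL blk Q / 2 *
            ((P.a (k + 1) / P.A (k + 1)) ^ 2 * ‖P.v (k + 1) - P.v k‖ ^ 2)) =
            (bigL blk Q * P.a (k + 1) ^ 2) / (2 * P.A (k + 1)) * ‖P.v (k + 1) - P.v k‖ ^ 2 := by
          field_simp
        rw [e, hstep]
        field_simp
      have hgc := gcomb P hk1
      simp only [Nat.add_sub_cancel] at hgc
      rw [hsplit, hRR]
      have e3 : P.a (k + 1) * (f (P.x (k + 1)) + ⟪P.q (k + 1), P.v (k + 1) - P.x (k + 1)⟫) =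
          P.a (k + 1) * f (P.x (k + 1)) + P.a (k + 1) * ⟪G, P.v (k + 1) - P.x (k + 1)⟫ +
          P.a (k + 1) * ⟪eps P (k + 1), P.v (k + 1) - P.x (k + 1)⟫ := by
        rw [hqe]; ring
      have e4 : P.A k * (f (P.x (k + 1)) + ⟪G, P.y k - P.x (k + 1)⟫) =
          P.A k * f (P.x (k + 1)) + P.A k * ⟪G, P.y k - P.x (k + 1)⟫ := by ring
      have e5 : P.A (k + 1) * f (P.x (k + 1)) =
          P.A k * f (P.x (k + 1)) + P.a (k + 1) * f (P.x (k + 1)) := by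
        rw [A_succ]; ring
      have e6 : P.A (k + 1) * (f (P.x (k + 1)) + ⟪G, P.y (k + 1) - P.x (k + 1)⟫ +
          bigL blk Q / 2 * ‖P.y (k + 1) - P.x (k + 1)‖ ^ 2) =
          P.A (k + 1) * f (P.x (k + 1)) + P.A (k + 1) * ⟪G, P.y (k + 1) - P.x (k + 1)⟫ +
          P.A (k + 1) * (bigL blk Q / 2 * ‖P.y (k + 1) - P.x (k + 1)‖ ^ 2) := by ring
      have e7 : P.A (k + 1) * (f (P.y (k + 1)) + g (P.y (k + 1))) =
          P.A (k + 1) * f (P.y (k + 1)) + P.A (k + 1) * g (P.y (k + 1)) := by ring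
      have e8 : P.A k * (f (P.y k) + g (P.y k)) =
          P.A k * f (P.y k) + P.A k * g (P.y k) := by ring
      linarith [ih, hstrong, e3, hfcA, e4, e5, hinner, hsmA, e6, hsmooth_term, hgc, e7, e8]

lemma telescope (u : Euc d) : ∀ k, 1 ≤ k →
    ∑ i ∈ Finset.Icc 1 k, P.a i * ⟪eps P i, u - P.v i⟫ =
      -(P.a k * ⟪EE P k, u - P.v k⟫) +
        ∑ i ∈ Finset.Icc 1 (k - 1), P.a i * ⟪EE P i, P.v i - P.v (i + 1)⟫ := by
  intro k
  induction k with
  | zero => intro hk; exact absurd hk (by omega)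
  | succ k ih =>
      intro _
      rcases Nat.eq_zero_or_pos k with rfl | hk
      · rw [Finset.Icc_self, Finset.sum_singleton, show (0:ℕ) + 1 - 1 = 0 from rfl,
          Finset.Icc_eq_empty (by omega : ¬(1:ℕ) ≤ 0), Finset.sum_empty]
        have he := eps_smul P (le_refl 1)
        rw [show (1:ℕ) - 1 = 0 from rfl, P.ha0, zero_smul] at he
        have h2 : P.a 1 * ⟪eps P 1, u - P.v 1⟫ = ⟪P.a 1 • eps P 1, u - P.v 1⟫ :=
          (real_inner_smul_left _ _ _).symm
        rw [h2, he, show (0 : Euc d) - P.a 1 • EE P 1 = -(P.a 1 • EE P 1) from by module,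
          inner_neg_left, real_inner_smul_left]
        ring
      · obtain ⟨k', rfl⟩ : ∃ k', k = k' + 1 := ⟨k - 1, by omega⟩
        have ihh := ih (by omega)
        rw [Finset.sum_Icc_succ_top (by omega : (1:ℕ) ≤ k' + 1 + 1), ihh]
        have he := eps_smul P (by omega : (1:ℕ) ≤ k' + 1 + 1)
        simp only [Nat.add_sub_cancel] at he
        have h2 : P.a (k' + 1 + 1) * ⟪eps P (k' + 1 + 1), u - P.v (k' + 1 + 1)⟫ =
            P.a (k' + 1) * ⟪EE P (k' + 1), u - P.v (k' + 1 + 1)⟫ -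
            P.a (k' + 1 + 1) * ⟪EE P (k' + 1 + 1), u - P.v (k' + 1 + 1)⟫ := by
          rw [show P.a (k' + 1 + 1) * ⟪eps P (k' + 1 + 1), u - P.v (k' + 1 + 1)⟫ =
            ⟪P.a (k' + 1 + 1) • eps P (k' + 1 + 1), u - P.v (k' + 1 + 1)⟫ from
            (real_inner_smul_left _ _ _).symm, he, inner_sub_left,
            real_inner_smul_left, real_inner_smul_left]
        rw [h2]
        simp only [Nat.add_sub_cancel]
        rw [Finset.sum_Icc_succ_top (by omega : (1:ℕ) ≤ k' + 1)]
        have h3 : ⟪EE P (k' + 1), u - P.v (k' + 1 + 1)⟫ - ⟪EE P (k' + 1), u - P.v (k' + 1)⟫ =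
            ⟪EE P (k' + 1), P.v (k' + 1) - P.v (k' + 1 + 1)⟫ := by
          rw [← inner_sub_right, show u - P.v (k' + 1 + 1) - (u - P.v (k' + 1)) =
            P.v (k' + 1) - P.v (k' + 1 + 1) from by module]
        linear_combination P.a (k' + 1) * h3

lemma reindex (F : ℕ → ℝ) {k : ℕ} (hk : 1 ≤ k) :
    ∑ i ∈ Finset.Icc 1 (k - 1), F (i + 1) = ∑ i ∈ Finset.Icc 2 k, F i := by
  obtain ⟨k', rfl⟩ : ∃ k', k = k' + 1 := ⟨k - 1, by omega⟩
  simp only [Nat.add_sub_cancel]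
  rw [show (2:ℕ) = 1 + 1 from rfl, show k' + 1 = k' + 1 from rfl,
    ← Finset.map_add_right_Icc 1 k' 1, Finset.sum_map]
  refine Finset.sum_congr rfl fun i _ => ?_
  rw [addRightEmbedding_apply]

end ACAux

set_option maxHeartbeats 1000000

theorem stmt7 {d m : ℕ} {blk : Fin d → Fin m} {f g : Euc d → ℝ}
    {gj : Fin m → Euc d → ℝ} {Q : Fin m → Matrix (Fin d) (Fin d) ℝ} {γ : ℝ}
    (P : ACoder d m blk f g gj Q γ)
    (hstepEq : ∀ k, 1 ≤ k →
      P.a k ^ 2 / P.A k = 2 * (1 + P.A (k - 1) * γ) / (5 * bigL blk Q)) :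
    ∀ k : ℕ, 1 ≤ k →
      (∀ u : Euc d,
        (f (P.y k) + g (P.y k)) - (f u + g u)
            + 3 * (1 + P.A (k - 1) * γ) / (10 * P.A k) * ‖u - P.v k‖ ^ 2 ≤
          ‖u - P.x0‖ ^ 2 / (2 * P.A k)) ∧
      (∀ xs : Euc d, IsMinOn (fun z => f z + g z) Set.univ xs →
        (f (P.y k) + g (P.y k)) - (f xs + g xs) ≤ ‖xs - P.x0‖ ^ 2 / (2 * P.A k)) := by

  intro k hk
  have hA := ACAux.A_pos P hk
  have hσk1 := ACAux.sig_pos P (k - 1)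
  have hfirst : ∀ u : Euc d,
      (f (P.y k) + g (P.y k)) - (f u + g u)
          + 3 * (1 + P.A (k - 1) * γ) / (10 * P.A k) * ‖u - P.v k‖ ^ 2 ≤
        ‖u - P.x0‖ ^ 2 / (2 * P.A k) := by
    intro u
    have h2 := ACAux.psi_strong P k u
    have h3 := ACAux.psi_le P k u
    have h4 := ACAux.psi_v_ge P hstepEq k
    have hdiff : (∑ i ∈ Finset.Icc 1 k, P.a i * ⟪ACAux.eps P i, u - P.x i⟫) -
        (∑ i ∈ Finset.Icc 1 k, P.a i * ⟪ACAux.eps P i, P.v i - P.x i⟫) =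
        ∑ i ∈ Finset.Icc 1 k, P.a i * ⟪ACAux.eps P i, u - P.v i⟫ := by
      rw [← Finset.sum_sub_distrib]
      refine Finset.sum_congr rfl fun i _ => ?_
      have e : ⟪ACAux.eps P i, u - P.x i⟫ - ⟪ACAux.eps P i, P.v i - P.x i⟫ =
          ⟪ACAux.eps P i, u - P.v i⟫ := by
        rw [← inner_sub_right, show u - P.x i - (P.v i - P.x i) = u - P.v i from by module]
      linear_combination P.a i * e
    have hRRsplit : ACAux.RR P k =
        (∑ i ∈ Finset.Icc 1 k, P.a i * ⟪ACAux.eps P i, P.v i - P.x i⟫) +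
        ∑ i ∈ Finset.Icc 1 k, 3 / 10 * ACAux.sig P (i - 1) * ‖P.v i - P.v (i - 1)‖ ^ 2 := by
      rw [ACAux.RR, Finset.sum_add_distrib]
    have htel := ACAux.telescope P u k hk
    set Gq : ℕ → ℝ := fun i => 3 / 20 * ACAux.sig P (i - 1) * ‖P.v i - P.v (i - 1)‖ ^ 2
      with hGq
    have hGnn : ∀ i, 0 ≤ Gq i := fun i => by
      simp only [hGq]
      have := ACAux.sig_pos P (i - 1)
      exact mul_nonneg (mul_nonneg (by norm_num) this.le) (sq_nonneg _)
    have hmid : ∀ i ∈ Finset.Icc 1 (k - 1),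
        P.a i * ⟪ACAux.EE P i, P.v i - P.v (i + 1)⟫ ≤ Gq i + Gq (i + 1) := by
      intro i hi
      obtain ⟨hi1, _⟩ := Finset.mem_Icc.mp hi
      have hE2 := ACAux.E2 P hstepEq hi1
      have hain := (P.hapos i hi1).le
      have hyoung := ACAux.young_bound (xx := P.a i * ‖ACAux.EE P i‖)
        (yy := ‖P.v i - P.v (i + 1)‖) (D := ‖P.v i - P.v (i - 1)‖)
        (σ := ACAux.sig P (i - 1)) (mul_nonneg hain (norm_nonneg _))
        (ACAux.sig_pos P (i - 1)) hE2
      have hcs := real_inner_le_norm (ACAux.EE P i) (P.v i - P.v (i + 1))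
      have hcs2 := mul_le_mul_of_nonneg_left hcs hain
      have e1 : P.a i * (‖ACAux.EE P i‖ * ‖P.v i - P.v (i + 1)‖) =
          (P.a i * ‖ACAux.EE P i‖) * ‖P.v i - P.v (i + 1)‖ := by ring
      have hmono : ACAux.sig P (i - 1) ≤ ACAux.sig P i := ACAux.sig_sub_le P hi1
      have hrev2 : ‖P.v i - P.v (i + 1)‖ ^ 2 = ‖P.v (i + 1) - P.v i‖ ^ 2 := by
        rw [norm_sub_rev]
      have e2 : ACAux.sig P (i - 1) * ‖P.v i - P.v (i + 1)‖ ^ 2 =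
          ACAux.sig P (i - 1) * ‖P.v (i + 1) - P.v i‖ ^ 2 := by rw [hrev2]
      simp only [hGq, Nat.add_sub_cancel]
      nlinarith [hyoung, hcs2, e1, e2,
        mul_nonneg (sub_nonneg.2 hmono) (sq_nonneg ‖P.v (i + 1) - P.v i‖)]
    have hmidsum : ∑ i ∈ Finset.Icc 1 (k - 1), P.a i * ⟪ACAux.EE P i, P.v i - P.v (i + 1)⟫ ≤
        (∑ i ∈ Finset.Icc 1 (k - 1), Gq i) + ∑ i ∈ Finset.Icc 2 k, Gq i := by
      calc ∑ i ∈ Finset.Icc 1 (k - 1), P.a i * ⟪ACAux.EE P i, P.v i - P.v (i + 1)⟫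
          ≤ ∑ i ∈ Finset.Icc 1 (k - 1), (Gq i + Gq (i + 1)) := Finset.sum_le_sum hmid
        _ = (∑ i ∈ Finset.Icc 1 (k - 1), Gq i) + ∑ i ∈ Finset.Icc 1 (k - 1), Gq (i + 1) :=
            Finset.sum_add_distrib
        _ = (∑ i ∈ Finset.Icc 1 (k - 1), Gq i) + ∑ i ∈ Finset.Icc 2 k, Gq i := by
            rw [ACAux.reindex Gq hk]
    have hsub1 : (∑ i ∈ Finset.Icc 1 (k - 1), Gq i) + Gq k = ∑ i ∈ Finset.Icc 1 k, Gq i := by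
      obtain ⟨k', rfl⟩ : ∃ k', k = k' + 1 := ⟨k - 1, by omega⟩
      simp only [Nat.add_sub_cancel]
      rw [Finset.sum_Icc_succ_top (by omega : (1:ℕ) ≤ k' + 1)]
    have hsub2 : ∑ i ∈ Finset.Icc 2 k, Gq i ≤ ∑ i ∈ Finset.Icc 1 k, Gq i :=
      Finset.sum_le_sum_of_subset_of_nonneg
        (Finset.Icc_subset_Icc_left (by omega)) fun i _ _ => hGnn i
    have hE2k := ACAux.E2 P hstepEq hk
    have hfinterm : -(P.a k * ⟪ACAux.EE P k, u - P.v k⟫) ≤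
        Gq k + 3 / 20 * ACAux.sig P (k - 1) * ‖u - P.v k‖ ^ 2 := by
      have hneg : -(P.a k * ⟪ACAux.EE P k, u - P.v k⟫) =
          P.a k * ⟪ACAux.EE P k, P.v k - u⟫ := by
        rw [show P.v k - u = -(u - P.v k) from by module, inner_neg_right]
        ring
      have hak := (P.hapos k hk).le
      have hyoung := ACAux.young_bound (xx := P.a k * ‖ACAux.EE P k‖) (yy := ‖P.v k - u‖)
        (D := ‖P.v k - P.v (k - 1)‖) (σ := ACAux.sig P (k - 1))
        (mul_nonneg hak (norm_nonneg _)) hσk1 hE2k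
      have hcs := real_inner_le_norm (ACAux.EE P k) (P.v k - u)
      have hcs2 := mul_le_mul_of_nonneg_left hcs hak
      have e1 : P.a k * (‖ACAux.EE P k‖ * ‖P.v k - u‖) =
          (P.a k * ‖ACAux.EE P k‖) * ‖P.v k - u‖ := by ring
      have hrev2 : ‖P.v k - u‖ ^ 2 = ‖u - P.v k‖ ^ 2 := by rw [norm_sub_rev]
      rw [hneg]
      simp only [hGq]
      nlinarith [hyoung, hcs2, e1, hrev2]
    have herr : ∑ i ∈ Finset.Icc 1 k, P.a i * ⟪ACAux.eps P i, u - P.v i⟫ ≤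
        2 * (∑ i ∈ Finset.Icc 1 k, Gq i) +
          3 / 20 * ACAux.sig P (k - 1) * ‖u - P.v k‖ ^ 2 := by
      rw [htel]
      linarith [hmidsum, hsub1, hsub2, hfinterm]
    have hRRq : ∑ i ∈ Finset.Icc 1 k, 3 / 10 * ACAux.sig P (i - 1) * ‖P.v i - P.v (i - 1)‖ ^ 2 =
        2 * ∑ i ∈ Finset.Icc 1 k, Gq i := by
      rw [Finset.mul_sum]
      refine Finset.sum_congr rfl fun i _ => ?_
      simp only [hGq]
      ring
    have e9 : P.A k * ((f (P.y k) + g (P.y k)) - (f u + g u)) =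
        P.A k * (f (P.y k) + g (P.y k)) - P.A k * (f u + g u) := by ring
    have hmaster : P.A k * ((f (P.y k) + g (P.y k)) - (f u + g u)) +
        ACAux.sig P k / 2 * ‖u - P.v k‖ ^ 2 + 2 * (∑ i ∈ Finset.Icc 1 k, Gq i) ≤
        ‖u - P.x0‖ ^ 2 / 2 + ∑ i ∈ Finset.Icc 1 k, P.a i * ⟪ACAux.eps P i, u - P.v i⟫ := by
      linarith [h4, h2, h3, hRRsplit, hRRq, hdiff, e9]
    have hσmono : ACAux.sig P (k - 1) ≤ ACAux.sig P k := ACAux.sig_sub_le P hk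
    have hNnn : (0:ℝ) ≤ ‖u - P.v k‖ ^ 2 := sq_nonneg _
    have hmain : P.A k * ((f (P.y k) + g (P.y k)) - (f u + g u)) +
        3 / 10 * ACAux.sig P (k - 1) * ‖u - P.v k‖ ^ 2 ≤ ‖u - P.x0‖ ^ 2 / 2 := by
      nlinarith [hmaster, herr, hNnn, mul_nonneg (sub_nonneg.2 hσmono) hNnn]
    have e10 : (f (P.y k) + g (P.y k)) - (f u + g u)
        + 3 * (1 + P.A (k - 1) * γ) / (10 * P.A k) * ‖u - P.v k‖ ^ 2 =
        (P.A k * ((f (P.y k) + g (P.y k)) - (f u + g u)) +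
          3 / 10 * ACAux.sig P (k - 1) * ‖u - P.v k‖ ^ 2) * (P.A k)⁻¹ := by
      rw [ACAux.sig]
      field_simp
      try ring
    rw [e10, ← div_div, div_eq_mul_inv (‖u - P.x0‖ ^ 2 / 2)]
    exact mul_le_mul_of_nonneg_right hmain (inv_nonneg.2 hA.le)
  refine ⟨hfirst, fun xs _ => ?_⟩
  have h1 := hfirst xs
  have hnn : 0 ≤ 3 * (1 + P.A (k - 1) * γ) / (10 * P.A k) * ‖xs - P.v k‖ ^ 2 := by
    have hnum : (0:ℝ) ≤ 3 * (1 + P.A (k - 1) * γ) := by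
      have := hσk1
      rw [ACAux.sig] at this
      linarith
    have hden : (0:ℝ) ≤ 10 * P.A k := by linarith
    exact mul_nonneg (div_nonneg hnum hden) (sq_nonneg _)
  linarith
end
end

section
/- Let L > 0 and γ ≥ 0. Define A_0 = 0 and, for k ≥ 1, A_k = A_{k−1} + a_k where a_k > 0 is determined by a_k² = (2(1 + A_{k−1}γ)/(5L)) · A_k (i.e., a_k is the largest positive value with a_k²/A_k ≤ 2(1 + A_{k−1}γ)/(5L)). Then for all k ≥ 1: A_k ≥ max{ (2/(5L))(1 + √(2γ/(5L)))^{k−1}, k²/(10L) }. -/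
set_option maxHeartbeats 1000000

noncomputable section

theorem stmt9 (L γ : ℝ) (hL : 0 < L) (hγ : 0 ≤ γ) (a A : ℕ → ℝ)
    (hA0 : A 0 = 0)
    (hapos : ∀ k, 1 ≤ k → 0 < a k)
    (hA : ∀ k, 1 ≤ k → A k = A (k - 1) + a k)
    (hstep : ∀ k, 1 ≤ k → a k ^ 2 = 2 * (1 + A (k - 1) * γ) / (5 * L) * A k) :
    ∀ k : ℕ, 1 ≤ k →
      max (2 / (5 * L) * (1 + Real.sqrt (2 * γ / (5 * L))) ^ (k - 1))
          ((k : ℝ) ^ 2 / (10 * L)) ≤ A k := by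
  have h5L : (0:ℝ) < 5 * L := by linarith
  have hAnonneg : ∀ k, 0 ≤ A k := by
    intro k
    induction k with
    | zero => rw [hA0]
    | succ n ih =>
      have h1 : 1 ≤ n + 1 := Nat.le_add_left 1 n
      rw [hA (n+1) h1]
      simp only [Nat.add_sub_cancel]
      have := hapos (n+1) h1
      linarith
  have hApos : ∀ k, 1 ≤ k → 0 < A k := by
    intro k hk
    rw [hA k hk]
    have := hapos k hk
    have := hAnonneg (k-1)
    linarith
  have hmono : ∀ k, 1 ≤ k → A (k-1) ≤ A k := by
    intro k hk
    rw [hA k hk]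
    have := hapos k hk
    linarith
  -- A 1 = 2/(5L)
  have hA1e : A 1 = a 1 := by
    rw [hA 1 le_rfl]; simp [hA0]
  have hA1 : A 1 = 2 / (5 * L) := by
    have h := hstep 1 le_rfl
    simp only [show (1:ℕ) - 1 = 0 from rfl, hA0, zero_mul, add_zero, mul_one] at h
    rw [hA1e] at h ⊢
    have ha1 := hapos 1 le_rfl
    have h5L' : (5:ℝ) * L ≠ 0 := ne_of_gt h5L
    field_simp at h ⊢
    nlinarith
  set r := Real.sqrt (2 * γ / (5 * L)) with hrdef
  have hrnonneg : 0 ≤ r := Real.sqrt_nonneg _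
  have hr2 : r ^ 2 = 2 * γ / (5 * L) := Real.sq_sqrt (by positivity)
  -- geometric growth
  have hgeom : ∀ k, 1 ≤ k → (1 + r) * A (k-1) ≤ A k := by
    intro k hk
    have hst := hstep k hk
    have ha := hapos k hk
    have hAk := hApos k hk
    have hAm := hAnonneg (k-1)
    have hmo := hmono k hk
    have h1 : 2 * γ / (5 * L) * A (k-1) ^ 2 ≤ a k ^ 2 := by
      rw [hst]
      have heq : 2 * (1 + A (k-1) * γ) / (5 * L) * A k
          = 2 / (5*L) * A k + 2 * γ / (5*L) * (A (k-1) * A k) := by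
        field_simp
      rw [heq]
      have h2 : A (k-1) ^ 2 ≤ A (k-1) * A k := by nlinarith
      have h3 : 0 ≤ 2 / (5*L) * A k := by positivity
      have h4 : (0:ℝ) ≤ 2 * γ / (5*L) := by positivity
      nlinarith [mul_le_mul_of_nonneg_left h2 h4]
    have h4 : r * A (k-1) ≤ a k := by
      have hsq : (r * A (k-1))^2 ≤ a k ^2 := by
        calc (r * A (k-1))^2 = r^2 * A (k-1)^2 := by ring
        _ = 2*γ/(5*L) * A (k-1)^2 := by rw [hr2]
        _ ≤ a k ^2 := h1
      nlinarith [mul_nonneg hrnonneg hAm]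
    rw [hA k hk]
    linarith
  have hgeombound : ∀ k, 1 ≤ k → 2 / (5 * L) * (1 + r) ^ (k - 1) ≤ A k := by
    intro k hk
    induction k, hk using Nat.le_induction with
    | base => simp [hA1]
    | succ n hn ih =>
      have hstep' := hgeom (n+1) (by omega)
      simp only [Nat.add_sub_cancel] at hstep' ⊢
      have hpow : (1 + r) ^ n = (1 + r) * (1 + r) ^ (n - 1) := by
        conv_lhs => rw [show n = (n-1)+1 by omega]
        ring
      rw [hpow]
      have h1r : (0:ℝ) ≤ 1 + r := by linarith
      calc 2 / (5*L) * ((1+r) * (1+r)^(n-1)) = (1+r) * (2/(5*L) * (1+r)^(n-1)) := by ring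
      _ ≤ (1+r) * A n := by
          apply mul_le_mul_of_nonneg_left ih h1r
      _ ≤ A (n+1) := hstep'
  -- sqrt growth
  set s := Real.sqrt (2 / (5 * L)) with hsdef
  have hs2 : s ^ 2 = 2 / (5 * L) := Real.sq_sqrt (by positivity)
  have hspos : 0 < s := Real.sqrt_pos.2 (by positivity)
  have hsqrtstep : ∀ k, 1 ≤ k → Real.sqrt (A (k-1)) + s/2 ≤ Real.sqrt (A k) := by
    intro k hk
    have hst := hstep k hk
    have ha := hapos k hk
    have hAk := hApos k hk
    have hAm := hAnonneg (k-1)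
    set x := Real.sqrt (A k) with hx
    set y := Real.sqrt (A (k-1)) with hy
    have hx2 : x ^ 2 = A k := Real.sq_sqrt hAk.le
    have hy2 : y ^ 2 = A (k-1) := Real.sq_sqrt hAm
    have hxnn : 0 ≤ x := Real.sqrt_nonneg _
    have hynn : 0 ≤ y := Real.sqrt_nonneg _
    -- a k ^ 2 ≥ s^2 * x^2
    have h1 : s ^ 2 * x ^ 2 ≤ a k ^ 2 := by
      rw [hst, hs2, hx2]
      have heq : 2 * (1 + A (k-1) * γ) / (5 * L) * A k
          = 2 / (5*L) * A k + 2 * γ / (5*L) * (A (k-1) * A k) := by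
        field_simp
      rw [heq]
      have : 0 ≤ 2 * γ / (5*L) * (A (k-1) * A k) := by positivity
      linarith
    have h2 : s * x ≤ a k := by
      nlinarith [mul_nonneg hspos.le hxnn]
    -- x^2 ≥ y^2 + s*x
    have h3 : y ^ 2 + s * x ≤ x ^ 2 := by
      rw [hx2, hy2]
      have := hA k hk
      linarith
    have hxpos : s ≤ x := by
      have hx0 : 0 < x := Real.sqrt_pos.2 hAk
      have h4 : s * x ≤ x * x := by nlinarith [sq_nonneg y]
      exact (mul_le_mul_iff_of_pos_right hx0).1 h4
    have key : y ^ 2 ≤ (x - s/2) ^ 2 := by nlinarith [sq_nonneg s]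
    have h5 : y ≤ x - s/2 := by
      have h6 := Real.sqrt_le_sqrt key
      rwa [Real.sqrt_sq hynn, Real.sqrt_sq (by linarith)] at h6
    linarith
  have hsqrtbound : ∀ k : ℕ, (k : ℝ) * (s/2) ≤ Real.sqrt (A k) := by
    intro k
    induction k with
    | zero => simp [hA0]
    | succ n ih =>
      have hstep' := hsqrtstep (n+1) (by omega)
      simp only [Nat.add_sub_cancel] at hstep'
      push_cast
      linarith
  intro k hk
  apply max_le
  · exact hgeombound k hk
  · have h := hsqrtbound k
    have hknn : (0:ℝ) ≤ (k:ℝ) * (s/2) := by positivity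
    have hAk := hAnonneg k
    have : ((k:ℝ) * (s/2))^2 ≤ Real.sqrt (A k) ^ 2 := by
      apply pow_le_pow_left₀ hknn h
    rw [Real.sq_sqrt hAk] at this
    have hexp : ((k:ℝ) * (s/2))^2 = (k:ℝ)^2 * (s^2 / 4) := by ring
    rw [hexp, hs2] at this
    calc (k:ℝ)^2 / (10 * L) = (k:ℝ)^2 * (2/(5*L)/4) := by field_simp; ring
    _ ≤ A k := this
end
end

section
/- Suppose f is convex, differentiable, and satisfies the block-Lipschitz assumption with constant L. Fix s ≥ 2 and k ∈ {1,…,K}, and suppose the points satisfy x_{s,k} = (A_{s−1}/A_s) ỹ_{s−1} + (a_s/A_s) v_{s,k−1} and y_{s,k} = (A_{s−1}/A_s) ỹ_{s−1} + (a_s/A_s) v_{s,k}, where A_s = A_{s−1} + a_s with a_s > 0, A_{s−1} > 0. Then for every u ∈ ℝ^d and every vector q_{s,k} ∈ ℝ^d: E_{s,k}(u) ≤ −A_{s−1}(f(ỹ_{s−1}) − f(x_{s,k}) − ⟨∇f(x_{s,k}), ỹ_{s−1} − x_{s,k}⟩) + a_s ⟨∇f(x_{s,k}) − q_{s,k}, v_{s,k}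 − u⟩ + (L a_s²/(2 A_s) − K(1 + A_{s−1}γ)/2)‖v_{s,k} − v_{s,k−1}‖², where E_{s,k}(u) := A_s (f(y_{s,k}) − f(x_{s,k})) − A_{s−1}(f(ỹ_{s−1}) − f(x_{s,k})) + a_s ⟨∇f(x_{s,k}) − q_{s,k}, x_{s,k} − u⟩ + a_s ⟨q_{s,k}, x_{s,k} − v_{s,k}⟩ − (K(1 + A_{s−1}γ)/2)‖v_{s,k} − v_{s,k−1}‖². -/
noncomputable section
open MeasureTheory Finset Set RealInnerProductSpace

namespace S12
variable {d m : ℕ}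

@[simp] lemma mk_apply (g : Fin d → ℝ) (i : Fin d) :
    ((EuclideanSpace.equiv (Fin d) ℝ).symm g) i = g i := rfl

lemma euc_ext {x y : Euc d} (h : ∀ i, x i = y i) : x = y := PiLp.ext h

lemma inner_euc (x y : Euc d) : ⟪x, y⟫ = ∑ i, x i * y i := by
  simp [PiLp.inner_apply, RCLike.inner_apply, conj_trivial]
  exact Finset.sum_congr rfl fun i _ => mul_comm _ _

lemma norm_sq_euc (x : Euc d) : ‖x‖ ^ 2 = ∑ i, x i ^ 2 := by
  rw [← real_inner_self_eq_norm_sq, inner_euc]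
  exact Finset.sum_congr rfl fun i _ => (sq (x i)).symm ▸ by ring

lemma grad_inner (f : Euc d → ℝ) (z w : Euc d) : ⟪gradient f z, w⟫ = fderiv ℝ f z w := by
  rw [gradient]; exact InnerProductSpace.toDual_symm_apply

def mulVecEuc (A : Matrix (Fin d) (Fin d) ℝ) (z : Euc d) : Euc d :=
  (EuclideanSpace.equiv (Fin d) ℝ).symm fun i => ∑ i', A i i' * z i'

lemma mulVecEuc_combo (A : Matrix (Fin d) (Fin d) ℝ) (s t : ℝ) (u v : Euc d) :
    mulVecEuc A (s • u + t • v) = s • mulVecEuc A u + t • mulVecEuc A v := by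
  apply euc_ext; intro i
  simp [mulVecEuc, Finset.mul_sum, ← Finset.sum_add_distrib]
  exact Finset.sum_congr rfl fun i' _ => by ring

variable {d m : ℕ}
open scoped MatrixOrder

lemma quadForm_eq_normsq {Q : Matrix (Fin d) (Fin d) ℝ} (hQ : Q.PosSemidef) (z : Euc d) :
    quadForm Q z = ‖mulVecEuc (CFC.sqrt Q) z‖ ^ 2 := by
  have hsym : (Matrix.nonneg_iff_posSemidef.mp (CFC.sqrt_nonneg Q)).1 = (Matrix.nonneg_iff_posSemidef.mp (CFC.sqrt_nonneg Q)).1 := rfl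
  have hS : ∀ a i, (CFC.sqrt Q) a i = (CFC.sqrt Q) i a := by
    intro a i
    conv_lhs => rw [← (Matrix.nonneg_iff_posSemidef.mp (CFC.sqrt_nonneg Q)).1]
    simp [Matrix.conjTranspose_apply]
  have hmul : ∀ a b, Q a b = ∑ i, (CFC.sqrt Q) i a * (CFC.sqrt Q) i b := by
    intro a b
    conv_lhs => rw [← CFC.sqrt_mul_sqrt_self Q hQ.nonneg]
    rw [Matrix.mul_apply]
    exact Finset.sum_congr rfl fun i _ => by rw [hS a i]
  rw [norm_sq_euc]
  simp only [mulVecEuc, mk_apply]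
  symm
  calc ∑ i, (∑ i', (CFC.sqrt Q) i i' * z i') ^ 2
      = ∑ i, ∑ a, ∑ b, ((CFC.sqrt Q) i a * z a) * ((CFC.sqrt Q) i b * z b) := by
        refine Finset.sum_congr rfl fun i _ => ?_
        rw [sq, Finset.sum_mul_sum]
    _ = ∑ a, ∑ b, (∑ i, (CFC.sqrt Q) i a * (CFC.sqrt Q) i b) * z a * z b := by
        rw [Finset.sum_comm]
        refine Finset.sum_congr rfl fun a _ => ?_
        rw [Finset.sum_comm]
        refine Finset.sum_congr rfl fun b _ => ?_
        rw [Finset.sum_mul, Finset.sum_mul]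
        exact Finset.sum_congr rfl fun i _ => by ring
    _ = quadForm Q z := by
        rw [quadForm]
        exact Finset.sum_congr rfl fun a _ => Finset.sum_congr rfl fun b _ => by rw [hmul]

lemma quadForm_nonneg {Q : Matrix (Fin d) (Fin d) ℝ} (hQ : Q.PosSemidef) (z : Euc d) :
    0 ≤ quadForm Q z := by rw [quadForm_eq_normsq hQ]; positivity

lemma sqrt_quadForm_combo {Q : Matrix (Fin d) (Fin d) ℝ} (hQ : Q.PosSemidef) (u v : Euc d)
    {t : ℝ} (ht : 0 ≤ t) (ht1 : t ≤ 1) :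
    Real.sqrt (quadForm Q (t • u + (1 - t) • v)) ≤
      t * Real.sqrt (quadForm Q u) + (1 - t) * Real.sqrt (quadForm Q v) := by
  rw [quadForm_eq_normsq hQ, quadForm_eq_normsq hQ, quadForm_eq_normsq hQ,
    Real.sqrt_sq (norm_nonneg _), Real.sqrt_sq (norm_nonneg _), Real.sqrt_sq (norm_nonneg _),
    mulVecEuc_combo]
  calc ‖t • mulVecEuc (CFC.sqrt Q) u + (1 - t) • mulVecEuc (CFC.sqrt Q) v‖
      ≤ ‖t • mulVecEuc (CFC.sqrt Q) u‖ + ‖(1 - t) • mulVecEuc (CFC.sqrt Q) v‖ := norm_add_le _ _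
    _ = t * ‖mulVecEuc (CFC.sqrt Q) u‖ + (1 - t) * ‖mulVecEuc (CFC.sqrt Q) v‖ := by
        rw [norm_smul, norm_smul, Real.norm_eq_abs, Real.norm_eq_abs,
          abs_of_nonneg ht, abs_of_nonneg (by linarith)]

lemma quadForm_le_spec (Q : Matrix (Fin d) (Fin d) ℝ) (z : Euc d) :
    quadForm Q z ≤ specNorm Q * ‖z‖ ^ 2 := by
  have happ : ∀ i, (Matrix.toEuclideanCLM (𝕜 := ℝ) Q z) i = ∑ i', Q i i' * z i' := by
    intro i
    have : z = (WithLp.equiv 2 (Fin d → ℝ)).symm (WithLp.equiv 2 (Fin d → ℝ) z) := rfl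
    rw [Matrix.ofLp_toEuclideanCLM]
    simp [Matrix.toLin'_apply, Matrix.mulVec, dotProduct]
  have h1 : quadForm Q z = ⟪Matrix.toEuclideanCLM (𝕜 := ℝ) Q z, z⟫ := by
    rw [inner_euc, quadForm]
    symm
    refine Finset.sum_congr rfl fun i _ => ?_
    rw [happ, Finset.sum_mul]
    exact Finset.sum_congr rfl fun i' _ => by ring
  rw [h1]
  calc ⟪Matrix.toEuclideanCLM (𝕜 := ℝ) Q z, z⟫ ≤ ‖Matrix.toEuclideanCLM (𝕜 := ℝ) Q z‖ * ‖z‖ :=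
        real_inner_le_norm _ _
    _ ≤ (specNorm Q * ‖z‖) * ‖z‖ := by
        apply mul_le_mul_of_nonneg_right _ (norm_nonneg _)
        exact (Matrix.toEuclideanCLM (𝕜 := ℝ) Q).le_opNorm z
    _ = specNorm Q * ‖z‖ ^ 2 := by ring
variable {d m : ℕ}

lemma seg (f : Euc d → ℝ) (hdiff : Differentiable ℝ f) (c w gx : Euc d) (a b : ℝ)
    (hub : ∀ t ∈ Set.Icc (0:ℝ) 1, ⟪gradient f (c + t • w) - gx, w⟫ ≤ a * t + b * (1 - t)) :
    f (c + w) - f c - ⟪gx, w⟫ ≤ (a + b) / 2 := by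
  have hline : ∀ t : ℝ, HasDerivAt (fun s : ℝ => f (c + s • w)) ⟪gradient f (c + t • w), w⟫ t := by
    intro t
    have h1 : HasDerivAt (fun s : ℝ => c + s • w) w t := by
      simpa using ((hasDerivAt_id t).smul_const w).const_add c
    have h2 := (hdiff (c + t • w)).hasFDerivAt.comp_hasDerivAt t h1
    rw [grad_inner]
    exact h2
  set φ : ℝ → ℝ :=
    fun t => ⟪gx, w⟫ * t + a * t ^ 2 / 2 + b * (t - t ^ 2 / 2) - f (c + t • w) with hφ
  have hφd : ∀ t : ℝ,
      HasDerivAt φ (⟪gx, w⟫ + a * t + b * (1 - t) - ⟪gradient f (c + t • w), w⟫) t := by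
    intro t
    have h1 : HasDerivAt (fun t : ℝ => t ^ 2) (2 * t) t := by simpa using hasDerivAt_pow 2 t
    have h2 : HasDerivAt (fun t : ℝ => t) 1 t := hasDerivAt_id t
    have hp := ((h2.const_mul ⟪gx, w⟫).add ((h1.const_mul a).div_const 2)).add
      ((h2.sub (h1.div_const 2)).const_mul b)
    have hp' : HasDerivAt (fun t : ℝ => ⟪gx, w⟫ * t + a * t ^ 2 / 2 + b * (t - t ^ 2 / 2))
        (⟪gx, w⟫ + a * t + b * (1 - t)) t := by
      exact hp.congr_deriv (by ring)
    exact hp'.sub (hline t)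
  have hmono : MonotoneOn φ (Set.Icc 0 1) := by
    apply monotoneOn_of_deriv_nonneg (convex_Icc 0 1)
    · exact fun t _ => (hφd t).continuousAt.continuousWithinAt
    · exact fun t _ => (hφd t).differentiableAt.differentiableWithinAt
    · intro t ht
      rw [interior_Icc] at ht
      rw [(hφd t).deriv]
      have h3 := hub t ⟨le_of_lt ht.1, le_of_lt ht.2⟩
      rw [inner_sub_left] at h3
      linarith
  have h01 := hmono (Set.left_mem_Icc.2 zero_le_one) (Set.right_mem_Icc.2 zero_le_one) zero_le_one
  have e0 : φ 0 = -f c := by simp [hφ]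
  have e1 : φ 1 = ⟪gx, w⟫ + a / 2 + b / 2 - f (c + w) := by
    simp [hφ]
    ring
  rw [e0, e1] at h01
  linarith

variable {d m : ℕ}

def maskGE (blk : Fin d → Fin m) (j : ℕ) (z : Euc d) : Euc d :=
  (EuclideanSpace.equiv (Fin d) ℝ).symm fun i => if j ≤ (blk i : ℕ) + 1 then z i else 0

lemma quadForm_keepGE (blk : Fin d → Fin m) (j : ℕ) (Q : Matrix (Fin d) (Fin d) ℝ) (z : Euc d) :
    quadForm (keepGE blk j Q) z = quadForm Q (maskGE blk j z) := by
  unfold quadForm keepGE maskGE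
  refine Finset.sum_congr rfl fun i _ => Finset.sum_congr rfl fun i' _ => ?_
  simp only [Matrix.of_apply, mk_apply]
  split_ifs <;> first | ring1 | (exfalso; omega)

lemma blockMask_sub (blk : Fin d → Fin m) (j : Fin m) (x y : Euc d) :
    blockMask blk j x - blockMask blk j y = blockMask blk j (x - y) := by
  apply euc_ext; intro i
  simp [blockMask]
  split_ifs <;> simp

lemma inner_blockMask (blk : Fin d → Fin m) (j : Fin m) (g z : Euc d) :
    ⟪g, blockMask blk j z⟫ = ⟪blockMask blk j g, blockMask blk j z⟫ := by
  rw [inner_euc, inner_euc]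
  refine Finset.sum_congr rfl fun i _ => ?_
  simp only [blockMask, mk_apply]
  split_ifs <;> ring

lemma sum_blockMask (blk : Fin d → Fin m) (z : Euc d) :
    ∑ j : Fin m, blockMask blk j z = z := by
  apply euc_ext; intro i
  rw [WithLp.ofLp_sum, Finset.sum_apply]
  simp [blockMask]

lemma sum_normsq_blockMask (blk : Fin d → Fin m) (z : Euc d) :
    ∑ j : Fin m, ‖blockMask blk j z‖ ^ 2 = ‖z‖ ^ 2 := by
  simp only [norm_sq_euc, blockMask, mk_apply]
  rw [Finset.sum_comm]
  refine Finset.sum_congr rfl fun i _ => ?_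
  rw [Finset.sum_eq_single (blk i)] <;> simp +contextual [eq_comm]

lemma maskGE_split (blk : Fin d → Fin m) (j : Fin m) (z : Euc d) :
    maskGE blk ((j : ℕ) + 1) z = blockMask blk j z + maskGE blk ((j : ℕ) + 2) z := by
  apply euc_ext; intro i
  simp only [maskGE, blockMask, mk_apply, PiLp.add_apply, Fin.ext_iff]
  split_ifs <;> first | (exfalso; omega) | simp

variable {d m : ℕ}

lemma quadForm_add (A B : Matrix (Fin d) (Fin d) ℝ) (z : Euc d) :
    quadForm (A + B) z = quadForm A z + quadForm B z := by
  unfold quadForm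
  rw [← Finset.sum_add_distrib]
  refine Finset.sum_congr rfl fun i _ => ?_
  rw [← Finset.sum_add_distrib]
  refine Finset.sum_congr rfl fun i' _ => ?_
  simp [Matrix.add_apply]; ring

lemma quadForm_sum {ι : Type*} (s : Finset ι) (M : ι → Matrix (Fin d) (Fin d) ℝ) (z : Euc d) :
    quadForm (∑ j ∈ s, M j) z = ∑ j ∈ s, quadForm (M j) z := by
  classical
  induction s using Finset.induction with
  | empty => simp [quadForm]
  | insert _ _ hnot ih =>
      rw [Finset.sum_insert hnot, Finset.sum_insert hnot, quadForm_add, ih]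

lemma keepGE_posSemidef (blk : Fin d → Fin m) (j : ℕ) {Q : Matrix (Fin d) (Fin d) ℝ}
    (hQ : Q.PosSemidef) (z : Euc d) : 0 ≤ quadForm (keepGE blk j Q) z := by
  rw [quadForm_keepGE]
  exact quadForm_nonneg hQ _

variable {d m : ℕ}

theorem descent (blk : Fin d → Fin m) (f : Euc d → ℝ) (hdiff : Differentiable ℝ f)
    (Q : Fin m → Matrix (Fin d) (Fin d) ℝ) (hpsd : ∀ j, (Q j).PosSemidef)
    (hlip : BlockLip blk f Q) (x y : Euc d) :
    f y - f x - ⟪gradient f x, y - x⟫ ≤ bigL blk Q / 2 * ‖y - x‖ ^ 2 := by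
  set h : Euc d := y - x with hh
  set P : ℕ → Euc d := fun j => blockCombine blk j x y with hP
  have hP0 : P 0 = y := by
    apply euc_ext; intro i; simp [hP, blockCombine]
  have hPm : P m = x := by
    apply euc_ext; intro i
    have hb := (blk i).isLt
    simp only [hP, blockCombine, mk_apply]
    rw [if_pos (by omega)]
  have hstep : ∀ j : Fin m, P (j : ℕ) = P ((j : ℕ) + 1) + blockMask blk j h := by
    intro j
    apply euc_ext; intro i
    simp only [hP, blockCombine, blockMask, mk_apply, PiLp.add_apply, hh, PiLp.sub_apply,
      Fin.ext_iff]
    split_ifs <;> first | (exfalso; omega) | simp | ring1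
  have hdiffx : ∀ j : Fin m, P ((j : ℕ) + 1) - x = maskGE blk ((j : ℕ) + 2) h := by
    intro j
    apply euc_ext; intro i
    simp only [hP, blockCombine, maskGE, mk_apply, PiLp.sub_apply, hh]
    split_ifs <;> first | (exfalso; omega) | simp
  set A : Fin m → ℝ := fun j => Real.sqrt (quadForm (keepGE blk ((j : ℕ) + 1) (Q j)) h) with hA
  set B : Fin m → ℝ := fun j => Real.sqrt (quadForm (keepGE blk ((j : ℕ) + 2) (Q j)) h) with hB
  set C : Fin m → ℝ := fun j => ‖blockMask blk j h‖ with hC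
  have key : ∀ j : Fin m,
      f (P (j : ℕ)) - f (P ((j : ℕ) + 1)) - ⟪gradient f x, blockMask blk j h⟫ ≤
        (A j * C j + B j * C j) / 2 := by
    intro j
    have hub : ∀ t ∈ Set.Icc (0:ℝ) 1,
        ⟪gradient f (P ((j : ℕ) + 1) + t • blockMask blk j h) - gradient f x,
          blockMask blk j h⟫ ≤ (A j * C j) * t + (B j * C j) * (1 - t) := by
      intro t ht
      set w := blockMask blk j h with hw
      set u := P ((j : ℕ) + 1) + t • w with hu
      have e1 : ⟪gradient f u - gradient f x, w⟫ =
          ⟪blockMask blk j (gradient f u - gradient f x), blockMask blk j h⟫ := by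
        rw [hw]; exact inner_blockMask blk j _ h
      have e2 : u - x = t • maskGE blk ((j : ℕ) + 1) h + (1 - t) • maskGE blk ((j : ℕ) + 2) h := by
        have e3 : u - x = maskGE blk ((j : ℕ) + 2) h + t • w := by
          rw [hu, add_sub_right_comm, hdiffx j]
        rw [e3, maskGE_split blk j h, ← hw]
        module
      have hl := hlip j u x
      rw [blockMask_sub] at hl
      have h4 : ‖blockMask blk j (gradient f u - gradient f x)‖ ≤
          Real.sqrt (quadForm (Q j) (u - x)) := by
        rw [← Real.sqrt_sq (norm_nonneg (blockMask blk j (gradient f u - gradient f x)))]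
        exact Real.sqrt_le_sqrt hl
      have h5 : Real.sqrt (quadForm (Q j) (u - x)) ≤ t * A j + (1 - t) * B j := by
        rw [e2]
        simp only [hA, hB]
        rw [quadForm_keepGE, quadForm_keepGE]
        exact sqrt_quadForm_combo (hpsd j) (maskGE blk ((j : ℕ) + 1) h)
          (maskGE blk ((j : ℕ) + 2) h) ht.1 ht.2
      calc ⟪gradient f u - gradient f x, w⟫
          ≤ ‖blockMask blk j (gradient f u - gradient f x)‖ * ‖w‖ := by
            rw [e1, hw]; exact real_inner_le_norm _ _
        _ ≤ Real.sqrt (quadForm (Q j) (u - x)) * ‖w‖ :=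
            mul_le_mul_of_nonneg_right h4 (norm_nonneg _)
        _ ≤ (t * A j + (1 - t) * B j) * ‖w‖ :=
            mul_le_mul_of_nonneg_right h5 (norm_nonneg _)
        _ = (A j * C j) * t + (B j * C j) * (1 - t) := by rw [hC]; ring
    have := seg f hdiff (P ((j : ℕ) + 1)) (blockMask blk j h) (gradient f x)
      (A j * C j) (B j * C j) hub
    rw [← hstep j] at this
    linarith
  have tele : f y - f x = ∑ jn ∈ Finset.range m, (f (P jn) - f (P (jn + 1))) := by
    rw [Finset.sum_range_sub' (fun jn => f (P jn)) m, hP0, hPm]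
  have gapsum : f y - f x - ⟪gradient f x, h⟫ =
      ∑ j : Fin m, (f (P (j : ℕ)) - f (P ((j : ℕ) + 1)) - ⟪gradient f x, blockMask blk j h⟫) := by
    rw [Finset.sum_sub_distrib, ← inner_sum, sum_blockMask blk h, tele,
      Fin.sum_univ_eq_sum_range (fun jn => f (P jn) - f (P (jn + 1))) m]
  have hAnn : ∀ j, 0 ≤ A j := fun j => Real.sqrt_nonneg _
  have hBnn : ∀ j, 0 ≤ B j := fun j => Real.sqrt_nonneg _
  have hCnn : ∀ j, 0 ≤ C j := fun j => norm_nonneg _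
  set S : ℝ := ∑ j : Fin m, (A j + B j) * C j with hS
  have hSnn : 0 ≤ S :=
    Finset.sum_nonneg fun j _ => mul_nonneg (add_nonneg (hAnn j) (hBnn j)) (hCnn j)
  have gapS : f y - f x - ⟪gradient f x, h⟫ ≤ S / 2 := by
    rw [gapsum]
    calc (∑ j : Fin m,
        (f (P (j : ℕ)) - f (P ((j : ℕ) + 1)) - ⟪gradient f x, blockMask blk j h⟫))
        ≤ ∑ j : Fin m, (A j * C j + B j * C j) / 2 := Finset.sum_le_sum fun j _ => key j
      _ = S / 2 := by
          rw [hS, ← Finset.sum_div]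
          congr 1
          exact Finset.sum_congr rfl fun j _ => by ring
  have hq2 : ∑ j : Fin m, (A j ^ 2 + B j ^ 2) = quadForm (Qtilde blk Q) h := by
    rw [Qtilde, quadForm_sum]
    refine Finset.sum_congr rfl fun j _ => ?_
    simp only [hA, hB]
    rw [quadForm_add, Real.sq_sqrt (keepGE_posSemidef blk _ (hpsd j) h),
      Real.sq_sqrt (keepGE_posSemidef blk _ (hpsd j) h)]
  have hCS : S ^ 2 ≤ (∑ j : Fin m, (A j + B j) ^ 2) * (∑ j : Fin m, C j ^ 2) :=
    Finset.sum_mul_sq_le_sq_mul_sq Finset.univ _ _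
  have hAB2 : (∑ j : Fin m, (A j + B j) ^ 2) ≤ 2 * quadForm (Qtilde blk Q) h := by
    rw [← hq2, Finset.mul_sum]
    exact Finset.sum_le_sum fun j _ => by nlinarith [sq_nonneg (A j - B j)]
  have hC2 : (∑ j : Fin m, C j ^ 2) = ‖h‖ ^ 2 := sum_normsq_blockMask blk h
  have hspec : quadForm (Qtilde blk Q) h ≤ specNorm (Qtilde blk Q) * ‖h‖ ^ 2 :=
    quadForm_le_spec _ _
  have hsn : 0 ≤ specNorm (Qtilde blk Q) := by unfold specNorm; exact norm_nonneg _
  have hLnn : 0 ≤ bigL blk Q := Real.sqrt_nonneg _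
  have hL2 : bigL blk Q ^ 2 = 2 * specNorm (Qtilde blk Q) := Real.sq_sqrt (by positivity)
  have hfin : S ≤ bigL blk Q * ‖h‖ ^ 2 := by
    have h1 : S ^ 2 ≤ (bigL blk Q * ‖h‖ ^ 2) ^ 2 := by
      rw [mul_pow, hL2]
      calc S ^ 2 ≤ (∑ j : Fin m, (A j + B j) ^ 2) * (∑ j : Fin m, C j ^ 2) := hCS
        _ ≤ (2 * quadForm (Qtilde blk Q) h) * ‖h‖ ^ 2 := by
            rw [hC2]; exact mul_le_mul_of_nonneg_right hAB2 (by positivity)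
        _ ≤ (2 * (specNorm (Qtilde blk Q) * ‖h‖ ^ 2)) * ‖h‖ ^ 2 := by
            apply mul_le_mul_of_nonneg_right _ (by positivity)
            linarith
        _ = 2 * specNorm (Qtilde blk Q) * (‖h‖ ^ 2) ^ 2 := by ring
    calc S = Real.sqrt (S ^ 2) := (Real.sqrt_sq hSnn).symm
      _ ≤ Real.sqrt ((bigL blk Q * ‖h‖ ^ 2) ^ 2) := Real.sqrt_le_sqrt h1
      _ = bigL blk Q * ‖h‖ ^ 2 := Real.sqrt_sq (by positivity)
  linarith [gapS, hfin]

end S12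

theorem stmt12 {d m : ℕ} (blk : Fin d → Fin m) (hmono : Monotone blk)
    (hsurj : Function.Surjective blk)
    (f : Euc d → ℝ) (hconv : ConvexOn ℝ Set.univ f) (hdiff : Differentiable ℝ f)
    (Q : Fin m → Matrix (Fin d) (Fin d) ℝ) (hpsd : ∀ j, (Q j).PosSemidef)
    (hlip : BlockLip blk f Q)
    (γ : ℝ) (hγ : 0 ≤ γ) (K : ℕ) (hK : 1 ≤ K)
    (ty vprev vcur xsk ysk : Euc d) (Ap as : ℝ) (hAp : 0 < Ap) (has : 0 < as)
    (hx : xsk = (Ap / (Ap + as)) • ty + (as / (Ap + as)) • vprev)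
    (hy : ysk = (Ap / (Ap + as)) • ty + (as / (Ap + as)) • vcur) :
    ∀ u qsk : Euc d,
      (Ap + as) * (f ysk - f xsk) - Ap * (f ty - f xsk)
          + as * ⟪gradient f xsk - qsk, xsk - u⟫ + as * ⟪qsk, xsk - vcur⟫
          - (K : ℝ) * (1 + Ap * γ) / 2 * ‖vcur - vprev‖ ^ 2 ≤
        -(Ap * (f ty - f xsk - ⟪gradient f xsk, ty - xsk⟫))
          + as * ⟪gradient f xsk - qsk, vcur - u⟫
          + (bigL blk Q * as ^ 2 / (2 * (Ap + as)) - (K : ℝ) * (1 + Ap * γ) / 2) *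
              ‖vcur - vprev‖ ^ 2 := by
  intro u qsk
  have hAs : (0:ℝ) < Ap + as := by linarith
  have hAs' : (Ap + as) ≠ 0 := ne_of_gt hAs
  set g := gradient f xsk with hg
  have hyx : ysk - xsk = (as / (Ap + as)) • (vcur - vprev) := by
    rw [hx, hy]; module
  have hδ : vcur - vprev = (vcur - xsk) - (vprev - xsk) := by abel
  have hG : (Ap + as) * ⟪g, ysk - xsk⟫ =
      as * (⟪g, vcur - xsk⟫ - ⟪g, vprev - xsk⟫) := by
    rw [hyx, hδ, real_inner_smul_right, inner_sub_right]
    field_simp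
  have hnorm : ‖ysk - xsk‖ ^ 2 = (as / (Ap + as)) ^ 2 * ‖vcur - vprev‖ ^ 2 := by
    rw [hyx, norm_smul, mul_pow, Real.norm_eq_abs, sq_abs]
  have hz : Ap • (ty - xsk) + as • (vprev - xsk) = 0 := by
    rw [hx]
    match_scalars <;> field_simp <;> ring
  have hE2 : Ap * ⟪g, ty - xsk⟫ + as * ⟪g, vprev - xsk⟫ = 0 := by
    have h0 : (inner ℝ g (Ap • (ty - xsk) + as • (vprev - xsk)) : ℝ) = 0 := by
      rw [hz, inner_zero_right]
    rw [inner_add_right, real_inner_smul_right, real_inner_smul_right] at h0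
    exact h0
  have hE1 : as * ⟪g - qsk, vcur - u⟫ - as * ⟪g - qsk, xsk - u⟫ - as * ⟪qsk, xsk - vcur⟫ =
      as * ⟪g, vcur - xsk⟫ := by
    simp only [inner_sub_left, inner_sub_right]
    ring
  have hd := S12.descent blk f hdiff Q hpsd hlip xsk ysk
  rw [← hg] at hd
  have hd2 : (Ap + as) * (f ysk - f xsk) - (Ap + as) * ⟪g, ysk - xsk⟫ ≤
      bigL blk Q * as ^ 2 / (2 * (Ap + as)) * ‖vcur - vprev‖ ^ 2 := by
    have h3 := mul_le_mul_of_nonneg_left hd (le_of_lt hAs)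
    rw [hnorm] at h3
    have he : (Ap + as) * (bigL blk Q / 2 * ((as / (Ap + as)) ^ 2 * ‖vcur - vprev‖ ^ 2)) =
        bigL blk Q * as ^ 2 / (2 * (Ap + as)) * ‖vcur - vprev‖ ^ 2 := by
      field_simp
    rw [he] at h3
    linarith
  linarith [hd2, hG, hE1, hE2]
end
end

section
/- Consider the VR-A-CODER iterates. For all s ∈ {2,…,S} and k ∈ {1,…,K}: −Σ_{j=1}^m a_{s,k−1} E[⟨∇^(j) f_{t_{s,k,j}}(x_{s,k−1}) − ∇^(j) f_{t_{s,k,j}}(w_{s,k−1,j}), v_{s,k}^(j) − v_{s,k−1}^(j)⟩] ≤ E[(K(1 + A_{s−1}γ)/8)‖v_{s,k} − v_{s,k−1}‖² + (a_{s,k−1}^4 L²/(K A_{s,k−1}² (1 + A_{s−1}γ)))‖v_{s,k−1} − v_{s,k−2}‖²], where E denotes expectation over all the random indices. -/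
noncomputable section
open MeasureTheory Finset Set RealInnerProductSpace

/-- The VR-A-CODER iterates (variance-reduced A-CODER), encoded pointwise on a
probability space `Ω` carrying the independent uniformly distributed sampling
indices `t s k j`.  Prox steps are encoded as minimization conditions. -/
structure VRACoder (d m n K S : ℕ) (blk : Fin d → Fin m)
    (f : Fin n → Euc d → ℝ) (g : Euc d → ℝ) (gj : Fin m → Euc d → ℝ)
    (Q : Fin m → Matrix (Fin d) (Fin d) ℝ) (γ : ℝ)
    (Ω : Type) [MeasurableSpace Ω] (μ : MeasureTheory.Measure Ω) where
  x0 : Euc d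
  t : ℕ → ℕ → Fin m → Ω → Fin n
  a : ℕ → ℝ
  A : ℕ → ℝ
  x : ℕ → ℕ → Ω → Euc d
  y : ℕ → ℕ → Ω → Euc d
  q : ℕ → ℕ → Ω → Euc d
  w : ℕ → ℕ → Fin m → Ω → Euc d
  v : ℕ → ℤ → Ω → Euc d
  ty : ℕ → Ω → Euc d
  hn : 0 < n
  hK : 1 ≤ K
  hS : 2 ≤ S
  hmono : Monotone blk
  hsurj : Function.Surjective blk
  hpsd : ∀ j, (Q j).PosSemidef
  hLpos : 0 < bigL blk Q
  hfconv : ∀ i, ConvexOn ℝ Set.univ (f i)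
  hfdiff : ∀ i, Differentiable ℝ (f i)
  hflip : ∀ i, BlockLip blk (f i) Q
  hγ : 0 ≤ γ
  hgconv : ConvexOn ℝ Set.univ g
  hgsc : SubgradStrongConvex γ g
  hgsep : ∀ z, g z = ∑ j, gj j z
  hgjblock : ∀ j u u', blockMask blk j u = blockMask blk j u' → gj j u = gj j u'
  hgjconv : ∀ j, ConvexOn ℝ Set.univ (gj j)
  hprob : MeasureTheory.IsProbabilityMeasure μ
  htmeas : ∀ s k j, Measurable (t s k j)
  htunif : ∀ s k j c, μ (t s k j ⁻¹' {c}) = (n : ENNReal)⁻¹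
  htindep : ProbabilityTheory.iIndepFun
      (fun p : ℕ × ℕ × Fin m => t p.1 p.2.1 p.2.2) μ
  ha0 : a 0 = 0
  hA0 : A 0 = 0
  ha1 : a 1 = 1 / (4 * bigL blk Q)
  hA1 : A 1 = a 1
  ha : ∀ s, 2 ≤ s → s ≤ S →
      a s = Real.sqrt ((K : ℝ) * A (s - 1) * (1 + A (s - 1) * γ) / (8 * bigL blk Q))
  hA : ∀ s, 2 ≤ s → s ≤ S → A s = A (s - 1) + a s
  hty0 : ∀ ω, ty 0 ω = x0
  hv10 : ∀ ω, v 1 0 ω = x0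
  hy10 : ∀ ω, y 1 0 ω = x0
  hx11 : ∀ ω, x 1 1 ω = x0
  hv11 : ∀ ω, IsMinOn (fun u => a 1 * g u +
      ‖u - (x0 - a 1 • gradient (fun z => (n : ℝ)⁻¹ * ∑ i, f i z) x0)‖ ^ 2 / 2)
      Set.univ (v 1 1 ω)
  hty1 : ∀ ω, ty 1 ω = v 1 1 ω
  hy11 : ∀ ω, y 1 1 ω = v 1 1 ω
  hw11 : ∀ j ω, w 1 1 j ω = blockCombine blk ((j : ℕ) + 1) (x 1 1 ω) (y 1 1 ω)
  hv20 : ∀ ω, v 2 0 ω = v 1 1 ω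
  hv2m1 : ∀ ω, v 2 (-1) ω = v 1 0 ω
  hw20 : ∀ j ω, w 2 0 j ω = w 1 1 j ω
  hx20 : ∀ ω, x 2 0 ω = x 1 1 ω
  hv0 : ∀ s, 3 ≤ s → s ≤ S → ∀ ω, v s 0 ω = v (s - 1) (K : ℤ) ω
  hvm1 : ∀ s, 3 ≤ s → s ≤ S → ∀ ω, v s (-1) ω = v (s - 1) ((K : ℤ) - 1) ω
  hw0 : ∀ s, 3 ≤ s → s ≤ S → ∀ j ω, w s 0 j ω = w (s - 1) K j ω
  hx0 : ∀ s, 3 ≤ s → s ≤ S → ∀ ω, x s 0 ω = x (s - 1) K ω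
  hxk : ∀ s, 2 ≤ s → s ≤ S → ∀ k, 1 ≤ k → k ≤ K → ∀ ω,
      x s k ω = (A (s - 1) / A s) • ty (s - 1) ω + (a s / A s) • v s ((k : ℤ) - 1) ω
  hw : ∀ s, 2 ≤ s → s ≤ S → ∀ k, 1 ≤ k → k ≤ K → ∀ j ω,
      w s k j ω = blockCombine blk ((j : ℕ) + 1) (x s k ω) (y s k ω)
  hq : ∀ s, 2 ≤ s → s ≤ S → ∀ k, 1 ≤ k → k ≤ K → ∀ j ω,
      blockMask blk j (q s k ω) = blockMask blk j
        (gradient (f (t s k j ω)) (w s k j ω)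
          - gradient (f (t s k j ω)) (ty (s - 1) ω)
          + gradient (fun z => (n : ℝ)⁻¹ * ∑ i, f i z) (ty (s - 1) ω)
          + ((if k = 1 then a (s - 1) else a s) / a s) •
              (gradient (f (t s k j ω)) (x s (k - 1) ω)
                - gradient (f (t s k j ω)) (w s (k - 1) j ω)))
  hv : ∀ s, 2 ≤ s → s ≤ S → ∀ k, 1 ≤ k → k ≤ K → ∀ ω,
      IsMinOn (fun u => (A (s - 1) + a s * (k : ℝ) / (K : ℝ)) * g u +
        ‖u - (x0 - a 1 • gradient (fun z => (n : ℝ)⁻¹ * ∑ i, f i z) x0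
          - (K : ℝ)⁻¹ • ((∑ s' ∈ Finset.Icc 2 (s - 1), ∑ k' ∈ Finset.Icc 1 K,
              a s' • q s' k' ω)
            + ∑ k' ∈ Finset.Icc 1 k, a s • q s k' ω))‖ ^ 2 / 2)
        Set.univ (v s (k : ℤ) ω)
  hy : ∀ s, 2 ≤ s → s ≤ S → ∀ k, 1 ≤ k → k ≤ K → ∀ ω,
      y s k ω = (A (s - 1) / A s) • ty (s - 1) ω + (a s / A s) • v s (k : ℤ) ω
  hty : ∀ s, 2 ≤ s → s ≤ S → ∀ ω,
      ty s ω = (K : ℝ)⁻¹ • ∑ k ∈ Finset.Icc 1 K, y s k ω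

section MaskLemmas

variable {d m : ℕ} (blk : Fin d → Fin m)

/-- tail mask: keep coordinates in blocks with index `≥ p` (i.e. not `blk i + 1 ≤ p`). -/
def tailMask (p : ℕ) (z : Euc d) : Euc d :=
  (EuclideanSpace.equiv (Fin d) ℝ).symm fun i => if (blk i : ℕ) + 1 ≤ p then 0 else z i

variable {blk}

lemma blockMask_apply (j : Fin m) (z : Euc d) (i : Fin d) :
    blockMask blk j z i = if blk i = j then z i else 0 := rfl

lemma tailMask_apply (p : ℕ) (z : Euc d) (i : Fin d) :
    tailMask blk p z i = if (blk i : ℕ) + 1 ≤ p then 0 else z i := rfl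

lemma blockCombine_apply (p : ℕ) (x y : Euc d) (i : Fin d) :
    blockCombine blk p x y i = if (blk i : ℕ) + 1 ≤ p then x i else y i := rfl

lemma blockMask_sub (j : Fin m) (x y : Euc d) :
    blockMask blk j (x - y) = blockMask blk j x - blockMask blk j y := by
  ext i
  simp only [PiLp.sub_apply, blockMask_apply]
  split <;> simp

lemma blockMask_add (j : Fin m) (x y : Euc d) :
    blockMask blk j (x + y) = blockMask blk j x + blockMask blk j y := by
  ext i
  simp only [PiLp.add_apply, blockMask_apply]
  split <;> simp

lemma blockMask_smul (j : Fin m) (c : ℝ) (x : Euc d) :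
    blockMask blk j (c • x) = c • blockMask blk j x := by
  ext i
  simp only [PiLp.smul_apply, blockMask_apply, smul_eq_mul]
  split <;> simp

lemma blockMask_idem (j : Fin m) (x : Euc d) :
    blockMask blk j (blockMask blk j x) = blockMask blk j x := by
  ext i
  simp only [blockMask_apply]
  split <;> simp

lemma sum_apply_euc {ι : Type*} (s : Finset ι) (h : ι → Euc d) (i : Fin d) :
    (∑ j ∈ s, h j) i = ∑ j ∈ s, h j i := by
  induction s using Finset.cons_induction with
  | empty => rfl
  | cons a s ha ih => rw [Finset.sum_cons, Finset.sum_cons, ← ih, PiLp.add_apply]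

lemma sum_blockMask (z : Euc d) : ∑ j : Fin m, blockMask blk j z = z := by
  ext i
  rw [sum_apply_euc]
  simp only [blockMask_apply]
  rw [Finset.sum_ite_eq Finset.univ (blk i) (fun _ => z i)]
  simp

lemma norm_sq_coord (z : Euc d) : ‖z‖ ^ 2 = ∑ i, z i ^ 2 := by
  rw [EuclideanSpace.norm_eq, Real.sq_sqrt (by positivity)]
  simp [Real.norm_eq_abs, sq_abs]

lemma norm_sq_eq_sum_mask (z : Euc d) :
    ‖z‖ ^ 2 = ∑ j : Fin m, ‖blockMask blk j z‖ ^ 2 := by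
  simp only [norm_sq_coord]
  rw [Finset.sum_comm]
  refine Finset.sum_congr rfl fun i _ => ?_
  simp only [blockMask_apply]
  rw [Finset.sum_congr rfl (fun j _ => by
    split <;> simp_all [sq] : ∀ j ∈ Finset.univ, (if blk i = j then z i else 0) ^ 2
      = if blk i = j then z i ^ 2 else 0)]
  rw [Finset.sum_ite_eq Finset.univ (blk i) (fun _ => z i ^ 2)]
  simp

end MaskLemmas
section QuadForm

variable {d m : ℕ} {blk : Fin d → Fin m}

lemma quadForm_nonneg {Q : Matrix (Fin d) (Fin d) ℝ} (hQ : Q.PosSemidef) (z : Euc d) :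
    0 ≤ quadForm Q z := by
  have h := hQ.dotProduct_mulVec_nonneg (fun i => z i)
  simp only [dotProduct, Matrix.mulVec, star, Pi.star_apply, star_trivial] at h
  calc (0:ℝ) ≤ ∑ i, z i * ∑ i', Q i i' * z i' := h
  _ = quadForm Q z := by
      unfold quadForm
      refine Finset.sum_congr rfl fun i _ => ?_
      rw [Finset.mul_sum]
      exact Finset.sum_congr rfl fun i' _ => by ring

lemma quadForm_add (Q R : Matrix (Fin d) (Fin d) ℝ) (z : Euc d) :
    quadForm (Q + R) z = quadForm Q z + quadForm R z := by
  unfold quadForm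
  rw [← Finset.sum_add_distrib]
  refine Finset.sum_congr rfl fun i _ => ?_
  rw [← Finset.sum_add_distrib]
  exact Finset.sum_congr rfl fun i' _ => by simp [Matrix.add_apply]; ring

lemma quadForm_sum {ι : Type*} (s : Finset ι) (Q : ι → Matrix (Fin d) (Fin d) ℝ) (z : Euc d) :
    quadForm (∑ j ∈ s, Q j) z = ∑ j ∈ s, quadForm (Q j) z := by
  induction s using Finset.cons_induction with
  | empty => simp [quadForm]
  | cons a s ha ih => rw [Finset.sum_cons, Finset.sum_cons, quadForm_add, ih]

lemma quadForm_smul (Q : Matrix (Fin d) (Fin d) ℝ) (c : ℝ) (z : Euc d) :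
    quadForm Q (c • z) = c ^ 2 * quadForm Q z := by
  unfold quadForm
  rw [Finset.mul_sum]
  refine Finset.sum_congr rfl fun i _ => ?_
  rw [Finset.mul_sum]
  refine Finset.sum_congr rfl fun i' _ => ?_
  simp only [PiLp.smul_apply, smul_eq_mul]
  ring

lemma quadForm_keepGE (Q : Matrix (Fin d) (Fin d) ℝ) (p : ℕ) (z : Euc d) :
    quadForm (keepGE blk (p + 1) Q) z = quadForm Q (tailMask blk p z) := by
  unfold quadForm
  refine Finset.sum_congr rfl fun i _ => Finset.sum_congr rfl fun i' _ => ?_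
  simp only [keepGE, Matrix.of_apply, tailMask_apply]
  by_cases h1 : (blk i : ℕ) + 1 ≤ p
  · rw [if_neg (by omega : ¬(p + 1 ≤ (blk i : ℕ) + 1 ∧ p + 1 ≤ (blk i' : ℕ) + 1)), if_pos h1]
    ring
  · by_cases h2 : (blk i' : ℕ) + 1 ≤ p
    · rw [if_neg (by omega : ¬(p + 1 ≤ (blk i : ℕ) + 1 ∧ p + 1 ≤ (blk i' : ℕ) + 1)),
        if_neg h1, if_pos h2]
      ring
    · rw [if_pos ⟨by omega, by omega⟩, if_neg h1, if_neg h2]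

lemma quadForm_le_spec (Q : Matrix (Fin d) (Fin d) ℝ) (z : Euc d) :
    quadForm Q z ≤ specNorm Q * ‖z‖ ^ 2 := by
  have hq : quadForm Q z = ⟪(Matrix.toEuclideanCLM (𝕜 := ℝ) Q) z, z⟫ := by
    rw [PiLp.inner_apply]
    unfold quadForm
    refine Finset.sum_congr rfl fun i _ => ?_
    have hA : ((Matrix.toEuclideanCLM (𝕜 := ℝ) Q) z) i = ∑ i', Q i i' * z i' := rfl
    simp only [RCLike.inner_apply, starRingEnd_apply, star_trivial, hA]
    rw [Finset.mul_sum]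
    exact Finset.sum_congr rfl fun i' _ => by ring
  rw [hq]
  calc ⟪(Matrix.toEuclideanCLM (𝕜 := ℝ) Q) z, z⟫ ≤ ‖(Matrix.toEuclideanCLM (𝕜 := ℝ) Q) z‖ * ‖z‖ :=
        real_inner_le_norm _ _
  _ ≤ ‖Matrix.toEuclideanCLM (𝕜 := ℝ) Q‖ * ‖z‖ * ‖z‖ := by
      gcongr
      exact ContinuousLinearMap.le_opNorm _ z
  _ = specNorm Q * ‖z‖ ^ 2 := by unfold specNorm; ring

lemma bigL_sq {Q : Fin m → Matrix (Fin d) (Fin d) ℝ} :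
    bigL blk Q ^ 2 = 2 * specNorm (Qtilde blk Q) := by
  unfold bigL
  rw [Real.sq_sqrt]
  have : (0:ℝ) ≤ specNorm (Qtilde blk Q) := norm_nonneg _
  linarith

end QuadForm
section KeyPointwise

lemma young_step {T Y S1 a' β : ℝ} (hT : 0 ≤ T) (hS1 : 0 ≤ S1) (ha' : 0 ≤ a') (hβ : 0 < β)
    (hT2 : T ^ 2 ≤ S1 * Y ^ 2) :
    a' * T ≤ β / 2 * Y ^ 2 + a' ^ 2 * S1 / (2 * β) := by
  have key : 2 * β * (a' * T) ≤ β ^ 2 * Y ^ 2 + a' ^ 2 * S1 := by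
    rcases eq_or_ne Y 0 with hY | hY
    · rw [hY] at hT2
      simp only [ne_eq, OfNat.ofNat_ne_zero, not_false_eq_true, zero_pow, mul_zero] at hT2
      have hT0 : T = 0 := by nlinarith
      rw [hT0, hY]
      nlinarith
    · have hY2 : 0 < Y ^ 2 := by positivity
      nlinarith [sq_nonneg (β * Y ^ 2 - a' * T), hY2,
        mul_le_mul_of_nonneg_left hT2 (sq_nonneg a'), sq_nonneg (a' * T)]
  have h2β : (0:ℝ) < 2 * β := by positivity
  calc a' * T = 2 * β * (a' * T) / (2 * β) := by field_simp
  _ ≤ (β ^ 2 * Y ^ 2 + a' ^ 2 * S1) / (2 * β) := by gcongr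
  _ = β / 2 * Y ^ 2 + a' ^ 2 * S1 / (2 * β) := by field_simp

lemma key_pointwise {d m n : ℕ} {blk : Fin d → Fin m} {f : Fin n → Euc d → ℝ}
    {Q : Fin m → Matrix (Fin d) (Fin d) ℝ}
    (hpsd : ∀ j, (Q j).PosSemidef) (hflip : ∀ i, BlockLip blk (f i) Q)
    (t : Fin m → Fin n) (xx : Euc d) (ww : Fin m → Euc d)
    (v1 v0 vm : Euc d) (a' A' β : ℝ)
    (ha' : 0 ≤ a') (hA' : 0 < A') (hβ : 0 < β)
    (hxw : ∀ j : Fin m, xx - ww j = (a' / A') • tailMask blk ((j : ℕ) + 1) (vm - v0)) :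
    -(∑ j : Fin m, a' * ⟪blockMask blk j (gradient (f (t j)) xx - gradient (f (t j)) (ww j)),
        blockMask blk j (v1 - v0)⟫) ≤
      β / 2 * ‖v1 - v0‖ ^ 2 + a' ^ 4 * bigL blk Q ^ 2 / (4 * β * A' ^ 2) * ‖v0 - vm‖ ^ 2 := by
  set z : Euc d := vm - v0 with hz
  set D : Fin m → Euc d := fun j =>
    blockMask blk j (gradient (f (t j)) xx) - blockMask blk j (gradient (f (t j)) (ww j)) with hD
  have hmask : ∀ j, blockMask blk j (gradient (f (t j)) xx - gradient (f (t j)) (ww j)) = D j :=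
    fun j => blockMask_sub _ _ _
  set T : ℝ := ∑ j : Fin m, ‖D j‖ * ‖blockMask blk j (v1 - v0)‖ with hT
  set S1 : ℝ := ∑ j : Fin m, ‖D j‖ ^ 2 with hS1
  have hTnn : 0 ≤ T := Finset.sum_nonneg fun j _ => by positivity
  have hS1nn : 0 ≤ S1 := Finset.sum_nonneg fun j _ => by positivity
  -- Step 1 : Cauchy-Schwarz per block
  have step1 : -(∑ j : Fin m, a' * ⟪blockMask blk j (gradient (f (t j)) xx
      - gradient (f (t j)) (ww j)), blockMask blk j (v1 - v0)⟫) ≤ a' * T := by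
    rw [← Finset.sum_neg_distrib, hT, Finset.mul_sum]
    refine Finset.sum_le_sum fun j _ => ?_
    rw [hmask j, ← mul_neg]
    refine mul_le_mul_of_nonneg_left ?_ ha'
    have := abs_real_inner_le_norm (D j) (blockMask blk j (v1 - v0))
    have h2 := neg_abs_le ⟪D j, blockMask blk j (v1 - v0)⟫
    linarith
  -- Step 2 : Cauchy-Schwarz over the sum
  have step2 : T ^ 2 ≤ S1 * ‖v1 - v0‖ ^ 2 := by
    have := Finset.sum_mul_sq_le_sq_mul_sq Finset.univ (fun j => ‖D j‖)
      (fun j => ‖blockMask blk j (v1 - v0)‖)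
    rw [norm_sq_eq_sum_mask (blk := blk) (v1 - v0)]
    exact this
  -- Step 3 : Lipschitz bound on S1
  have step3 : S1 ≤ (a' / A') ^ 2 * (bigL blk Q ^ 2 / 2) * ‖z‖ ^ 2 := by
    have h1 : S1 ≤ ∑ j : Fin m, quadForm (Q j) (xx - ww j) := by
      refine Finset.sum_le_sum fun j _ => ?_
      exact hflip (t j) j xx (ww j)
    have h2 : ∀ j : Fin m, quadForm (Q j) (xx - ww j)
        = (a' / A') ^ 2 * quadForm (keepGE blk ((j : ℕ) + 2) (Q j)) z := by
      intro j
      rw [hxw j, quadForm_smul, quadForm_keepGE]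
    have h3 : ∑ j : Fin m, quadForm (keepGE blk ((j : ℕ) + 2) (Q j)) z
        ≤ quadForm (Qtilde blk Q) z := by
      unfold Qtilde
      rw [quadForm_sum]
      refine Finset.sum_le_sum fun j _ => ?_
      rw [quadForm_add]
      have : 0 ≤ quadForm (keepGE blk ((j : ℕ) + 1) (Q j)) z := by
        rcases Nat.exists_eq_add_of_le (Nat.one_le_iff_ne_zero.mpr (by omega) :
          1 ≤ (j : ℕ) + 1) with ⟨p, hp⟩
        rw [show ((j : ℕ) + 1) = p + 1 by omega, quadForm_keepGE]
        exact quadForm_nonneg (hpsd j) _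
      linarith
    have h4 : quadForm (Qtilde blk Q) z ≤ specNorm (Qtilde blk Q) * ‖z‖ ^ 2 :=
      quadForm_le_spec _ _
    have h5 : specNorm (Qtilde blk Q) = bigL blk Q ^ 2 / 2 := by
      rw [bigL_sq]; ring
    calc S1 ≤ ∑ j : Fin m, quadForm (Q j) (xx - ww j) := h1
    _ = (a' / A') ^ 2 * ∑ j : Fin m, quadForm (keepGE blk ((j : ℕ) + 2) (Q j)) z := by
        rw [Finset.mul_sum]; exact Finset.sum_congr rfl fun j _ => h2 j
    _ ≤ (a' / A') ^ 2 * (specNorm (Qtilde blk Q) * ‖z‖ ^ 2) := by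
        have := le_trans h3 h4
        have hnn : (0:ℝ) ≤ (a' / A') ^ 2 := sq_nonneg _
        nlinarith
    _ = (a' / A') ^ 2 * (bigL blk Q ^ 2 / 2) * ‖z‖ ^ 2 := by rw [h5]; ring
  -- Combine
  have young := young_step hTnn hS1nn ha' hβ step2
  have final : a' ^ 2 * S1 / (2 * β)
      ≤ a' ^ 4 * bigL blk Q ^ 2 / (4 * β * A' ^ 2) * ‖v0 - vm‖ ^ 2 := by
    have hzn : ‖z‖ = ‖v0 - vm‖ := by rw [hz, norm_sub_rev]
    rw [← hzn]
    have h6 : a' ^ 2 * S1 ≤ a' ^ 2 * ((a' / A') ^ 2 * (bigL blk Q ^ 2 / 2) * ‖z‖ ^ 2) :=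
      mul_le_mul_of_nonneg_left step3 (sq_nonneg _)
    have hA'ne : A' ≠ 0 := ne_of_gt hA'
    have hβne : β ≠ 0 := ne_of_gt hβ
    have heq : a' ^ 2 * ((a' / A') ^ 2 * (bigL blk Q ^ 2 / 2) * ‖z‖ ^ 2) / (2 * β)
        = a' ^ 4 * bigL blk Q ^ 2 / (4 * β * A' ^ 2) * ‖z‖ ^ 2 := by
      field_simp
      ring
    rw [← heq]
    exact div_le_div_of_nonneg_right h6 (by positivity) |>.trans_eq rfl
  calc -(∑ j : Fin m, a' * ⟪blockMask blk j (gradient (f (t j)) xx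
      - gradient (f (t j)) (ww j)), blockMask blk j (v1 - v0)⟫) ≤ a' * T := step1
  _ ≤ β / 2 * ‖v1 - v0‖ ^ 2 + a' ^ 2 * S1 / (2 * β) := young
  _ ≤ β / 2 * ‖v1 - v0‖ ^ 2 + a' ^ 4 * bigL blk Q ^ 2 / (4 * β * A' ^ 2) * ‖v0 - vm‖ ^ 2 := by
      linarith

end KeyPointwise
section ProxDet

variable {d m : ℕ} {blk : Fin d → Fin m}

lemma blockMask_mask_ne {j j' : Fin m} (h : j' ≠ j) (x : Euc d) :
    blockMask blk j' (blockMask blk j x) = 0 := by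
  ext i
  simp only [blockMask_apply]
  by_cases h1 : blk i = j' <;> by_cases h2 : blk i = j <;> simp_all

lemma midpoint_norm_sq (a b : Euc d) :
    ‖(1/2 : ℝ) • a + (1/2 : ℝ) • b‖ ^ 2 = ‖a‖ ^ 2 / 2 + ‖b‖ ^ 2 / 2 - ‖a - b‖ ^ 2 / 4 := by
  have hpar := parallelogram_law_with_norm ℝ a b
  have h1 : (1/2 : ℝ) • a + (1/2 : ℝ) • b = (1/2 : ℝ) • (a + b) := by
    rw [smul_add]
  rw [h1, norm_smul, Real.norm_eq_abs, abs_of_nonneg (by norm_num : (0:ℝ) ≤ 1/2)]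
  nlinarith [norm_nonneg (a+b), norm_nonneg (a-b), norm_nonneg a, norm_nonneg b]

variable {g : Euc d → ℝ} {gj : Fin m → Euc d → ℝ}
  (hgsep : ∀ z, g z = ∑ j, gj j z)
  (hgjblock : ∀ j u u', blockMask blk j u = blockMask blk j u' → gj j u = gj j u')
  (hgjconv : ∀ j, ConvexOn ℝ Set.univ (gj j))

include hgsep in
lemma obj_decomp (c : ℝ) (b u : Euc d) :
    c * g u + ‖u - b‖ ^ 2 / 2
      = ∑ j : Fin m, (c * gj j u + ‖blockMask blk j u - blockMask blk j b‖ ^ 2 / 2) := by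
  rw [hgsep u, Finset.mul_sum, norm_sq_eq_sum_mask (blk := blk) (u - b),
    Finset.sum_div, ← Finset.sum_add_distrib]
  refine Finset.sum_congr rfl fun j _ => ?_
  rw [blockMask_sub]

include hgsep hgjblock in
/-- single-block minimality extracted from global minimality -/
lemma block_min (c : ℝ) (b u : Euc d)
    (hu : IsMinOn (fun u => c * g u + ‖u - b‖ ^ 2 / 2) Set.univ u) (j : Fin m) (w : Euc d) :
    c * gj j u + ‖blockMask blk j u - blockMask blk j b‖ ^ 2 / 2
      ≤ c * gj j w + ‖blockMask blk j w - blockMask blk j b‖ ^ 2 / 2 := by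
  set R : Euc d := u - blockMask blk j u + blockMask blk j w with hR
  have hmaskR : ∀ j' : Fin m, blockMask blk j' R
      = if j' = j then blockMask blk j w else blockMask blk j' u := by
    intro j'
    rw [hR, blockMask_add, blockMask_sub]
    by_cases h : j' = j
    · subst h
      rw [blockMask_idem, blockMask_idem]
      simp
    · rw [blockMask_mask_ne h, blockMask_mask_ne h, if_neg h]
      simp
  have hmin := hu (Set.mem_univ R)
  simp only [Set.mem_setOf_eq] at hmin
  rw [obj_decomp hgsep (blk := blk) c b u, obj_decomp hgsep (blk := blk) c b R] at hmin
  rw [← Finset.add_sum_erase _ _ (Finset.mem_univ j),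
    ← Finset.add_sum_erase _ _ (Finset.mem_univ j)] at hmin
  have hrest : ∀ j' ∈ Finset.univ.erase j,
      c * gj j' R + ‖blockMask blk j' R - blockMask blk j' b‖ ^ 2 / 2
        = c * gj j' u + ‖blockMask blk j' u - blockMask blk j' b‖ ^ 2 / 2 := by
    intro j' hj'
    have hne : j' ≠ j := (Finset.mem_erase.mp hj').1
    have hm := hmaskR j'
    rw [if_neg hne] at hm
    rw [hm, hgjblock j' R u hm]
  rw [Finset.sum_congr rfl hrest] at hmin
  have hmj := hmaskR j
  rw [if_pos rfl] at hmj
  rw [hmj, hgjblock j R w hmj] at hmin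
  linarith

include hgsep hgjblock hgjconv in
lemma block_prox_det {c : ℝ} (hc : 0 ≤ c) {b b' u u' : Euc d}
    (hu : IsMinOn (fun u => c * g u + ‖u - b‖ ^ 2 / 2) Set.univ u)
    (hu' : IsMinOn (fun u => c * g u + ‖u - b'‖ ^ 2 / 2) Set.univ u')
    (j : Fin m) (hbb : blockMask blk j b = blockMask blk j b') :
    blockMask blk j u = blockMask blk j u' := by
  have hA1 : c * gj j u + ‖blockMask blk j u - blockMask blk j b‖ ^ 2 / 2
      ≤ c * gj j u' + ‖blockMask blk j u' - blockMask blk j b‖ ^ 2 / 2 :=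
    block_min hgsep hgjblock c b u hu j u'
  have hA2 : c * gj j u' + ‖blockMask blk j u' - blockMask blk j b‖ ^ 2 / 2
      ≤ c * gj j u + ‖blockMask blk j u - blockMask blk j b‖ ^ 2 / 2 := by
    have := block_min hgsep hgjblock c b' u' hu' j u
    rwa [← hbb] at this
  have hgum : gj j ((1/2 : ℝ) • u + (1/2 : ℝ) • u')
      ≤ (1/2 : ℝ) * gj j u + (1/2 : ℝ) * gj j u' := by
    have := (hgjconv j).2 (Set.mem_univ u) (Set.mem_univ u')
      (by norm_num : (0:ℝ) ≤ 1/2) (by norm_num : (0:ℝ) ≤ 1/2) (by norm_num)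
    simpa using this
  have hmaskum : blockMask blk j ((1/2 : ℝ) • u + (1/2 : ℝ) • u')
      = (1/2 : ℝ) • blockMask blk j u + (1/2 : ℝ) • blockMask blk j u' := by
    rw [blockMask_add, blockMask_smul, blockMask_smul]
  have hmid : ‖blockMask blk j ((1/2 : ℝ) • u + (1/2 : ℝ) • u') - blockMask blk j b‖ ^ 2
      = ‖blockMask blk j u - blockMask blk j b‖ ^ 2 / 2
        + ‖blockMask blk j u' - blockMask blk j b‖ ^ 2 / 2
        - ‖blockMask blk j u - blockMask blk j u'‖ ^ 2 / 4 := by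
    have hmm1 : blockMask blk j ((1/2 : ℝ) • u + (1/2 : ℝ) • u') - blockMask blk j b
        = (1/2 : ℝ) • (blockMask blk j u - blockMask blk j b)
          + (1/2 : ℝ) • (blockMask blk j u' - blockMask blk j b) := by
      rw [hmaskum]
      module
    rw [hmm1, midpoint_norm_sq]
    have : (blockMask blk j u - blockMask blk j b)
        - (blockMask blk j u' - blockMask blk j b)
        = blockMask blk j u - blockMask blk j u' := by abel
    rw [this]
  have hmin := block_min hgsep hgjblock c b u hu j ((1/2 : ℝ) • u + (1/2 : ℝ) • u')
  rw [hmid] at hmin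
  have hgum' : c * gj j ((1/2 : ℝ) • u + (1/2 : ℝ) • u')
      ≤ c * ((1/2 : ℝ) * gj j u + (1/2 : ℝ) * gj j u') :=
    mul_le_mul_of_nonneg_left hgum hc
  have hzero : ‖blockMask blk j u - blockMask blk j u'‖ ^ 2 ≤ 0 := by nlinarith
  have h0 : ‖blockMask blk j u - blockMask blk j u'‖ = 0 := by
    have := norm_nonneg (blockMask blk j u - blockMask blk j u')
    nlinarith
  exact sub_eq_zero.mp (norm_eq_zero.mp h0)

include hgsep hgjblock hgjconv in
lemma prox_det {c : ℝ} (hc : 0 ≤ c) {b u u' : Euc d}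
    (hu : IsMinOn (fun u => c * g u + ‖u - b‖ ^ 2 / 2) Set.univ u)
    (hu' : IsMinOn (fun u => c * g u + ‖u - b‖ ^ 2 / 2) Set.univ u') : u = u' := by
  rw [← sum_blockMask (blk := blk) u, ← sum_blockMask (blk := blk) u']
  exact Finset.sum_congr rfl fun j _ =>
    block_prox_det hgsep hgjblock hgjconv hc hu hu' j rfl

end ProxDet
section FRM

variable {Ω : Type} [MeasurableSpace Ω]

/-- finite-range measurable function -/
def FRM {α : Type*} [MeasurableSpace α] (h : Ω → α) : Prop :=
  Measurable h ∧ (Set.range h).Finite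

lemma frm_const {α : Type*} [MeasurableSpace α] (c : α) : FRM (fun _ : Ω => c) :=
  ⟨measurable_const, Set.finite_range_const⟩

lemma frm_comp {α β : Type*} [MeasurableSpace α] [MeasurableSingletonClass α]
    [MeasurableSpace β] {h : Ω → α} (hh : FRM h) (F : α → β) : FRM (fun ω => F (h ω)) := by
  constructor
  · intro s _
    have : (fun ω => F (h ω)) ⁻¹' s = h ⁻¹' (F ⁻¹' s ∩ Set.range h) := by
      rw [Set.preimage_inter, Set.preimage_range, Set.inter_univ]; rfl
    rw [this]
    exact hh.1 ((hh.2.subset Set.inter_subset_right).measurableSet)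
  · exact (hh.2.image F).subset (by rintro _ ⟨ω, rfl⟩; exact ⟨h ω, ⟨ω, rfl⟩, rfl⟩)

lemma frm_pair {α β : Type*} [MeasurableSpace α] [MeasurableSpace β]
    {h1 : Ω → α} {h2 : Ω → β} (hh1 : FRM h1) (hh2 : FRM h2) :
    FRM (fun ω => (h1 ω, h2 ω)) := by
  refine ⟨hh1.1.prodMk hh2.1, (hh1.2.prod hh2.2).subset ?_⟩
  rintro _ ⟨ω, rfl⟩
  exact ⟨⟨ω, rfl⟩, ⟨ω, rfl⟩⟩

lemma frm_pi {ι : Type*} [Fintype ι] {α : Type*} [MeasurableSpace α]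
    {h : ι → Ω → α} (hh : ∀ i, FRM (h i)) : FRM (fun ω (i : ι) => h i ω) := by
  refine ⟨measurable_pi_lambda _ fun i => (hh i).1, (Set.Finite.pi fun i => (hh i).2).subset ?_⟩
  rintro _ ⟨ω, rfl⟩
  exact fun i _ => ⟨ω, rfl⟩

lemma prodMSC {α β : Type*} [MeasurableSpace α] [MeasurableSpace β]
    [MeasurableSingletonClass α] [MeasurableSingletonClass β] :
    MeasurableSingletonClass (α × β) := by
  constructor
  intro p
  have : ({p} : Set (α × β)) = (Prod.fst ⁻¹' {p.1}) ∩ (Prod.snd ⁻¹' {p.2}) := by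
    ext q; simp [Prod.ext_iff]
  rw [this]
  exact (measurable_fst (measurableSet_singleton _)).inter
    (measurable_snd (measurableSet_singleton _))

lemma frm_det {α β : Type*} [MeasurableSpace α] [MeasurableSingletonClass α]
    [MeasurableSpace β] {h : Ω → α} (hh : FRM h) {u : Ω → β}
    (hdet : ∀ ω ω', h ω = h ω' → u ω = u ω') : FRM u := by
  rcases isEmpty_or_nonempty Ω with hΩ | hΩ
  · constructor
    · intro s _
      rw [Set.eq_empty_of_isEmpty (u ⁻¹' s)]
      exact MeasurableSet.empty
    · rw [Set.range_eq_empty]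
      exact Set.finite_empty
  · classical
    obtain ⟨ω₀⟩ := hΩ
    set F : α → β := fun y => if hy : ∃ ω, h ω = y then u hy.choose else u ω₀ with hF
    have : u = fun ω => F (h ω) := by
      funext ω
      rw [hF]
      have hex : ∃ ω', h ω' = h ω := ⟨ω, rfl⟩
      simp only [dif_pos hex]
      exact (hdet _ _ hex.choose_spec).symm
    rw [this]
    exact frm_comp hh F

lemma frm_fun_congr {α : Type*} [MeasurableSpace α] {h h' : Ω → α}
    (hh : FRM h) (he : ∀ ω, h' ω = h ω) : FRM h' := by
  have : h' = h := funext he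
  rw [this]; exact hh

lemma frm_add {E : Type*} [NormedAddCommGroup E] [MeasurableSpace E] [BorelSpace E]
    {h1 h2 : Ω → E} (hh1 : FRM h1) (hh2 : FRM h2) : FRM (fun ω => h1 ω + h2 ω) :=
  frm_comp (frm_pair hh1 hh2) (fun p => p.1 + p.2)

lemma frm_sum {ι : Type*} {E : Type*} [NormedAddCommGroup E] [MeasurableSpace E] [BorelSpace E]
    (s : Finset ι) (h : ι → Ω → E) (hh : ∀ i ∈ s, FRM (h i)) :
    FRM (fun ω => ∑ i ∈ s, h i ω) := by
  induction s using Finset.cons_induction with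
  | empty => exact frm_fun_congr (frm_const 0) (by simp)
  | cons a s ha ih =>
      have := frm_add (hh a (Finset.mem_cons_self a s))
        (ih fun i hi => hh i (Finset.mem_cons_of_mem hi))
      exact frm_fun_congr this (by intro ω; rw [Finset.sum_cons])

lemma frm_integrable {μ : MeasureTheory.Measure Ω} [MeasureTheory.IsFiniteMeasure μ]
    {h : Ω → ℝ} (hh : FRM h) : MeasureTheory.Integrable h μ := by
  have hb : BddAbove ((fun x => ‖x‖) '' Set.range h) := (hh.2.image _).bddAbove
  rcases isEmpty_or_nonempty Ω with hΩ | hΩ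
  · exact MeasureTheory.Integrable.mono' (MeasureTheory.integrable_const 0)
      hh.1.aestronglyMeasurable (Filter.Eventually.of_forall fun ω => (IsEmpty.false ω).elim)
  · obtain ⟨C, hC⟩ := hb
    refine MeasureTheory.Integrable.mono' (MeasureTheory.integrable_const C)
      hh.1.aestronglyMeasurable (Filter.Eventually.of_forall fun ω => ?_)
    exact hC ⟨h ω, ⟨ω, rfl⟩, rfl⟩

end FRM
section Alg

variable {d m n K S : ℕ} {blk : Fin d → Fin m} {f : Fin n → Euc d → ℝ}
    {g : Euc d → ℝ} {gj : Fin m → Euc d → ℝ} {Q : Fin m → Matrix (Fin d) (Fin d) ℝ}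
    {γ : ℝ} {Ω : Type} [MeasurableSpace Ω] {μ : MeasureTheory.Measure Ω}
    (P : VRACoder d m n K S blk f g gj Q γ Ω μ)

lemma a1_pos : 0 < P.a 1 := by
  rw [P.ha1]
  have := P.hLpos
  positivity

lemma a_nonneg : ∀ s, 1 ≤ s → s ≤ S → 0 ≤ P.a s := by
  intro s h1 h2
  rcases eq_or_lt_of_le h1 with h | h
  · rw [← h]; exact (a1_pos P).le
  · rw [P.ha s h h2]; exact Real.sqrt_nonneg _

lemma A_pos : ∀ s, 1 ≤ s → s ≤ S → 0 < P.A s := by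
  intro s
  induction s with
  | zero => omega
  | succ t ih =>
      intro h1 h2
      rcases Nat.eq_or_lt_of_le h1 with h | h
      · rw [show t + 1 = 1 by omega, P.hA1]; exact a1_pos P
      · rw [P.hA (t + 1) (by omega) h2]
        have hA := ih (by omega) (by omega)
        have ha := a_nonneg P (t + 1) (by omega) h2
        simp only [Nat.add_sub_cancel]
        linarith

lemma one_plus_pos (s : ℕ) (hs : 2 ≤ s) (hsS : s ≤ S) : 0 < 1 + P.A (s - 1) * γ := by
  have h1 : 0 < P.A (s - 1) := A_pos P (s - 1) (by omega) (by omega)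
  have := P.hγ
  nlinarith

lemma blockMask_eq_coord {z z' : Euc d} {j : Fin m}
    (h : blockMask blk j z = blockMask blk j z') {i : Fin d} (hi : blk i = j) :
    z i = z' i := by
  have h2 : blockMask blk j z i = blockMask blk j z' i := by rw [h]
  simpa [blockMask_apply, hi] using h2

/-- determinism of `(v s k, q s k)` given the data it depends on -/
lemma vq_det (s k : ℕ) (hs : 2 ≤ s) (hsS : s ≤ S) (hk1 : 1 ≤ k) (hkK : k ≤ K)
    (ω ω' : Ω)
    (hty_eq : P.ty (s - 1) ω = P.ty (s - 1) ω')
    (hx_eq : P.x s k ω = P.x s k ω')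
    (hxm_eq : P.x s (k - 1) ω = P.x s (k - 1) ω')
    (hwm_eq : ∀ j, P.w s (k - 1) j ω = P.w s (k - 1) j ω')
    (ht_eq : ∀ j, P.t s k j ω = P.t s k j ω')
    (hpre_eq : (∑ s' ∈ Finset.Icc 2 (s - 1), ∑ k' ∈ Finset.Icc 1 K, P.a s' • P.q s' k' ω)
        + ∑ k' ∈ Finset.Icc 1 (k - 1), P.a s • P.q s k' ω
      = (∑ s' ∈ Finset.Icc 2 (s - 1), ∑ k' ∈ Finset.Icc 1 K, P.a s' • P.q s' k' ω')
        + ∑ k' ∈ Finset.Icc 1 (k - 1), P.a s • P.q s k' ω') :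
    P.v s (k : ℤ) ω = P.v s (k : ℤ) ω' ∧ P.q s k ω = P.q s k ω' := by
  have hWsplit : ∀ ϖ : Ω, (∑ s' ∈ Finset.Icc 2 (s - 1), ∑ k' ∈ Finset.Icc 1 K,
        P.a s' • P.q s' k' ϖ) + ∑ k' ∈ Finset.Icc 1 k, P.a s • P.q s k' ϖ
      = ((∑ s' ∈ Finset.Icc 2 (s - 1), ∑ k' ∈ Finset.Icc 1 K, P.a s' • P.q s' k' ϖ)
        + ∑ k' ∈ Finset.Icc 1 (k - 1), P.a s • P.q s k' ϖ) + P.a s • P.q s k ϖ := by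
    intro ϖ
    have hk : k - 1 + 1 = k := by omega
    rw [← hk, Finset.sum_Icc_succ_top (by omega : 1 ≤ k - 1 + 1), hk]
    rw [add_assoc]
  have hc : 0 ≤ P.A (s - 1) + P.a s * (k : ℝ) / (K : ℝ) := by
    have h1 : 0 < P.A (s - 1) := A_pos P (s - 1) (by omega) (by omega)
    have h2 : 0 ≤ P.a s := a_nonneg P s (by omega) hsS
    have h3 : 0 ≤ P.a s * (k : ℝ) / (K : ℝ) :=
      div_nonneg (mul_nonneg h2 (Nat.cast_nonneg k)) (Nat.cast_nonneg K)
    linarith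
  have claim : ∀ r : ℕ, ∀ j : Fin m, m - (j : ℕ) - 1 ≤ r →
      blockMask blk j (P.q s k ω) = blockMask blk j (P.q s k ω') ∧
      blockMask blk j (P.v s (k : ℤ) ω) = blockMask blk j (P.v s (k : ℤ) ω') := by
    intro r
    induction r using Nat.strong_induction_on with
    | _ r ih =>
      intro j hj
      -- coordinates of v s k in higher blocks agree
      have hvk_coord : ∀ i : Fin d, (j : ℕ) < (blk i : ℕ) →
          P.v s (k : ℤ) ω i = P.v s (k : ℤ) ω' i := by
        intro i hi
        have hr' : m - (blk i : ℕ) - 1 < r := by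
          have hbl := (blk i).isLt
          omega
        exact blockMask_eq_coord (blk := blk) ((ih _ hr' (blk i) le_rfl).2) rfl
      -- w s k j agrees
      have hwj : P.w s k j ω = P.w s k j ω' := by
        rw [P.hw s hs hsS k hk1 hkK j ω, P.hw s hs hsS k hk1 hkK j ω']
        ext i
        simp only [blockCombine_apply]
        split
        · rw [hx_eq]
        · rename_i hcond
          rw [P.hy s hs hsS k hk1 hkK ω, P.hy s hs hsS k hk1 hkK ω']
          simp only [PiLp.add_apply, PiLp.smul_apply, smul_eq_mul]
          rw [hty_eq, hvk_coord i (by omega)]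
      -- mask of q s k agrees
      have hqmask : blockMask blk j (P.q s k ω) = blockMask blk j (P.q s k ω') := by
        rw [P.hq s hs hsS k hk1 hkK j ω, P.hq s hs hsS k hk1 hkK j ω',
          hwj, hty_eq, hxm_eq, hwm_eq j, ht_eq j]
      -- mask of v s k agrees via blockwise prox determinism
      have hvmask : blockMask blk j (P.v s (k : ℤ) ω) = blockMask blk j (P.v s (k : ℤ) ω') := by
        refine block_prox_det P.hgsep P.hgjblock P.hgjconv hc
          (P.hv s hs hsS k hk1 hkK ω) (P.hv s hs hsS k hk1 hkK ω') j ?_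
        have hWm : blockMask blk j ((∑ s' ∈ Finset.Icc 2 (s - 1), ∑ k' ∈ Finset.Icc 1 K,
              P.a s' • P.q s' k' ω) + ∑ k' ∈ Finset.Icc 1 k, P.a s • P.q s k' ω)
            = blockMask blk j ((∑ s' ∈ Finset.Icc 2 (s - 1), ∑ k' ∈ Finset.Icc 1 K,
              P.a s' • P.q s' k' ω') + ∑ k' ∈ Finset.Icc 1 k, P.a s • P.q s k' ω') := by
          rw [hWsplit ω, hWsplit ω', hpre_eq]
          simp only [blockMask_add, blockMask_smul, hqmask]
        simp only [blockMask_sub, blockMask_smul]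
        rw [hWm]
      exact ⟨hqmask, hvmask⟩
  constructor
  · rw [← sum_blockMask (blk := blk) (P.v s (k : ℤ) ω),
      ← sum_blockMask (blk := blk) (P.v s (k : ℤ) ω')]
    exact Finset.sum_congr rfl fun j _ => (claim m j (by omega)).2
  · rw [← sum_blockMask (blk := blk) (P.q s k ω), ← sum_blockMask (blk := blk) (P.q s k ω')]
    exact Finset.sum_congr rfl fun j _ => (claim m j (by omega)).1

end Alg
section FRMInduction

variable {d m n K S : ℕ} {blk : Fin d → Fin m} {f : Fin n → Euc d → ℝ}
    {g : Euc d → ℝ} {gj : Fin m → Euc d → ℝ} {Q : Fin m → Matrix (Fin d) (Fin d) ℝ}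
    {γ : ℝ} {Ω : Type} [MeasurableSpace Ω] {μ : MeasureTheory.Measure Ω}

/-- epoch-entry invariant -/
def InvP (P : VRACoder d m n K S blk f g gj Q γ Ω μ) (s : ℕ) : Prop :=
  FRM (P.ty (s - 1)) ∧ FRM (P.x s 0) ∧ (∀ j, FRM (P.w s 0 j)) ∧ FRM (P.v s 0)
    ∧ FRM (P.v s (-1)) ∧
  (∀ s' k', 2 ≤ s' → s' ≤ s - 1 → 1 ≤ k' → k' ≤ K → FRM (P.q s' k'))

variable (P : VRACoder d m n K S blk f g gj Q γ Ω μ)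

lemma frm_t (s k : ℕ) (j : Fin m) : FRM (P.t s k j) :=
  ⟨P.htmeas s k j, Set.toFinite _⟩

lemma frm_epoch (s : ℕ) (hs : 2 ≤ s) (hsS : s ≤ S) (hInv : InvP P s) :
    ∀ k, k ≤ K →
      (∀ k' : ℤ, -1 ≤ k' → k' ≤ (k : ℤ) → FRM (P.v s k')) ∧
      (∀ k', 1 ≤ k' → k' ≤ k →
        FRM (P.q s k') ∧ FRM (P.x s k') ∧ FRM (P.y s k') ∧ ∀ j, FRM (P.w s k' j)) := by
  obtain ⟨hty, hx0, hw0, hv0, hvm1, hqpre⟩ := hInv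
  intro k
  induction k with
  | zero =>
      intro _
      refine ⟨fun k' h1 h2 => ?_, fun k' h1 h2 => by omega⟩
      have : k' = -1 ∨ k' = 0 := by omega
      rcases this with h | h <;> subst h
      · exact hvm1
      · exact hv0
  | succ k ih =>
      intro hk1K
      obtain ⟨ihv, ihq⟩ := ih (by omega)
      have hvk : FRM (P.v s (k : ℤ)) := ihv (k : ℤ) (by omega) (by omega)
      -- x s (k+1)
      have hxk1 : FRM (P.x s (k + 1)) := by
        have hcomp := frm_comp (frm_pair hty hvk)
          (fun p : Euc d × Euc d => (P.A (s-1) / P.A s) • p.1 + (P.a s / P.A s) • p.2)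
        refine frm_fun_congr hcomp fun ω => ?_
        rw [P.hxk s hs hsS (k+1) (by omega) hk1K ω,
          show ((k+1 : ℕ) : ℤ) - 1 = (k : ℤ) by push_cast; ring]
      -- x s k and w s k j
      have hxkc : FRM (P.x s k) := by
        rcases Nat.eq_zero_or_pos k with h | h
        · subst h; exact hx0
        · exact (ihq k h le_rfl).2.1
      have hwkc : ∀ j, FRM (P.w s k j) := by
        rcases Nat.eq_zero_or_pos k with h | h
        · subst h; exact hw0
        · exact (ihq k h le_rfl).2.2.2
      -- prefix sum function
      have hpre : FRM (fun ω => (∑ s' ∈ Finset.Icc 2 (s - 1), ∑ k' ∈ Finset.Icc 1 K,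
          P.a s' • P.q s' k' ω) + ∑ k' ∈ Finset.Icc 1 k, P.a s • P.q s k' ω) := by
        apply frm_add
        · apply frm_sum
          intro s' hs'
          apply frm_sum
          intro k' hk'
          rw [Finset.mem_Icc] at hs' hk'
          exact frm_comp (hqpre s' k' hs'.1 hs'.2 hk'.1 hk'.2) (fun z => P.a s' • z)
        · apply frm_sum
          intro k' hk'
          rw [Finset.mem_Icc] at hk'
          exact frm_comp ((ihq k' hk'.1 hk'.2).1) (fun z => P.a s • z)
      -- determinism gives v and q at k+1
      have hpair : FRM (fun ω => (P.v s ((k + 1 : ℕ) : ℤ) ω, P.q s (k+1) ω)) := by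
        haveI i1 : MeasurableSingletonClass ((Fin m → Fin n) × Euc d) := prodMSC
        haveI i2 : MeasurableSingletonClass ((Fin m → Euc d) × (Fin m → Fin n) × Euc d) :=
          prodMSC
        haveI i3 : MeasurableSingletonClass (Euc d × (Fin m → Euc d) × (Fin m → Fin n) × Euc d) :=
          prodMSC
        haveI i4 : MeasurableSingletonClass
            (Euc d × Euc d × (Fin m → Euc d) × (Fin m → Fin n) × Euc d) := prodMSC
        haveI i5 : MeasurableSingletonClass
            (Euc d × Euc d × Euc d × (Fin m → Euc d) × (Fin m → Fin n) × Euc d) := prodMSC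
        refine frm_det (h := fun ω => (P.ty (s-1) ω, P.x s (k+1) ω, P.x s k ω,
          (fun j => P.w s k j ω), (fun j => P.t s (k+1) j ω),
          (∑ s' ∈ Finset.Icc 2 (s - 1), ∑ k' ∈ Finset.Icc 1 K, P.a s' • P.q s' k' ω)
            + ∑ k' ∈ Finset.Icc 1 k, P.a s • P.q s k' ω))
          (frm_pair hty (frm_pair hxk1 (frm_pair hxkc (frm_pair (frm_pi hwkc)
            (frm_pair (frm_pi (fun j => frm_t P s (k+1) j)) hpre))))) ?_
        intro ω ω' heq
        simp only [Prod.mk.injEq] at heq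
        obtain ⟨h1, h2, h3, h4, h5, h6⟩ := heq
        have := vq_det P s (k+1) hs hsS (by omega) hk1K ω ω' h1 h2
          (by simpa using h3) (fun j => by simpa using congrFun h4 j)
          (fun j => congrFun h5 j) (by simpa using h6)
        exact Prod.ext this.1 this.2
      have hvk1 : FRM (P.v s ((k + 1 : ℕ) : ℤ)) := frm_comp hpair Prod.fst
      have hqk1 : FRM (P.q s (k+1)) := frm_comp hpair Prod.snd
      have hyk1 : FRM (P.y s (k+1)) := by
        refine frm_fun_congr (frm_comp (frm_pair hty hvk1)
          (fun p : Euc d × Euc d => (P.A (s-1) / P.A s) • p.1 + (P.a s / P.A s) • p.2))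
          fun ω => ?_
        rw [P.hy s hs hsS (k+1) (by omega) hk1K ω]
      have hwk1 : ∀ j, FRM (P.w s (k+1) j) := by
        intro j
        refine frm_fun_congr (frm_comp (frm_pair hxk1 hyk1)
          (fun p : Euc d × Euc d => blockCombine blk ((j : ℕ) + 1) p.1 p.2)) fun ω => ?_
        rw [P.hw s hs hsS (k+1) (by omega) hk1K j ω]
      refine ⟨fun k' h1 h2 => ?_, fun k' h1 h2 => ?_⟩
      · rcases (by omega : k' ≤ (k : ℤ) ∨ k' = (k : ℤ) + 1) with h | h
        · exact ihv k' h1 h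
        · subst h
          rw [show ((k : ℤ) + 1) = ((k + 1 : ℕ) : ℤ) by push_cast; ring]
          exact hvk1
      · rcases (by omega : k' ≤ k ∨ k' = k + 1) with h | h
        · exact ihq k' h1 h
        · subst h
          exact ⟨hqk1, hxk1, hyk1, hwk1⟩

lemma inv_all : ∀ s, 2 ≤ s → s ≤ S → InvP P s := by
  intro s
  induction s with
  | zero => omega
  | succ t ih =>
      intro h2 hS
      rcases Nat.eq_or_lt_of_le h2 with h | h
      · -- base case s = 2
        rw [← h]
        have hv11c : ∀ ω ω', P.v 1 1 ω = P.v 1 1 ω' := fun ω ω' =>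
          prox_det P.hgsep P.hgjblock P.hgjconv (a1_pos P).le (P.hv11 ω) (P.hv11 ω')
        have hv11 : FRM (P.v 1 1) :=
          frm_det (frm_const (0 : ℝ)) (fun ω ω' _ => hv11c ω ω')
        refine ⟨?_, ?_, ?_, ?_, ?_, ?_⟩
        · exact frm_fun_congr hv11 (fun ω => P.hty1 ω)
        · exact frm_fun_congr (frm_const P.x0) (fun ω => by rw [P.hx20, P.hx11])
        · intro j
          refine frm_fun_congr (frm_comp hv11
            (fun z => blockCombine blk ((j : ℕ) + 1) P.x0 z)) fun ω => ?_
          rw [P.hw20, P.hw11, P.hx11, P.hy11]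
        · exact frm_fun_congr hv11 (fun ω => P.hv20 ω)
        · exact frm_fun_congr (frm_const P.x0) (fun ω => by rw [P.hv2m1, P.hv10])
        · intro s' k' hs1 hs2 _ _
          omega
      · -- step: t ≥ 2
        have ht2 : 2 ≤ t := by omega
        have htS : t ≤ S := by omega
        have hInvt := ih ht2 htS
        have hepoch := frm_epoch P t ht2 htS hInvt K le_rfl
        obtain ⟨ev, eq⟩ := hepoch
        have hyK := fun k (h1 : 1 ≤ k) (h2 : k ≤ K) => (eq k h1 h2).2.2.1
        refine ⟨?_, ?_, ?_, ?_, ?_, ?_⟩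
        · -- ty t
          simp only [Nat.add_sub_cancel]
          refine frm_fun_congr (frm_comp (frm_sum (Finset.Icc 1 K) (fun k ω => P.y t k ω)
            (fun k hk => by rw [Finset.mem_Icc] at hk; exact hyK k hk.1 hk.2))
            (fun z => (K : ℝ)⁻¹ • z)) fun ω => ?_
          rw [P.hty t ht2 htS ω]
        · exact frm_fun_congr ((eq K P.hK le_rfl).2.1)
            (fun ω => P.hx0 (t+1) (by omega) hS ω)
        · intro j
          exact frm_fun_congr ((eq K P.hK le_rfl).2.2.2 j)
            (fun ω => P.hw0 (t+1) (by omega) hS j ω)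
        · exact frm_fun_congr (ev (K : ℤ) (by omega) le_rfl)
            (fun ω => P.hv0 (t+1) (by omega) hS ω)
        · exact frm_fun_congr (ev ((K : ℤ) - 1) (by omega) (by omega))
            (fun ω => P.hvm1 (t+1) (by omega) hS ω)
        · intro s' k' hs1 hs2 hk1 hk2
          simp only [Nat.add_sub_cancel] at hs2
          rcases Nat.eq_or_lt_of_le hs2 with h | h
          · rw [h]; exact (eq k' hk1 hk2).1
          · exact hInvt.2.2.2.2.2 s' k' hs1 (by omega) hk1 hk2

end FRMInduction
section Final

lemma sub_blockCombine {d m : ℕ} {blk : Fin d → Fin m} (p : ℕ) (x y : Euc d) :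
    x - blockCombine blk p x y = tailMask blk p (x - y) := by
  ext i
  simp only [PiLp.sub_apply, blockCombine_apply, tailMask_apply]
  split <;> simp

lemma tailMask_smul {d m : ℕ} {blk : Fin d → Fin m} (p : ℕ) (c : ℝ) (z : Euc d) :
    tailMask blk p (c • z) = c • tailMask blk p z := by
  ext i
  simp only [tailMask_apply, PiLp.smul_apply, smul_eq_mul]
  split <;> simp

lemma lin_sub_lin {d : ℕ} (c1 c2 : ℝ) (t a b : Euc d) :
    (c1 • t + c2 • a) - (c1 • t + c2 • b) = c2 • (a - b) := by
  rw [smul_sub]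
  abel

theorem stmt14' {d m n K S : ℕ} {blk : Fin d → Fin m} {f : Fin n → Euc d → ℝ}
    {g : Euc d → ℝ} {gj : Fin m → Euc d → ℝ} {Q : Fin m → Matrix (Fin d) (Fin d) ℝ}
    {γ : ℝ} {Ω : Type} [MeasurableSpace Ω] {μ : MeasureTheory.Measure Ω}
    (P : VRACoder d m n K S blk f g gj Q γ Ω μ) :
    ∀ s, 2 ≤ s → s ≤ S → ∀ k, 1 ≤ k → k ≤ K →
      -(∑ j : Fin m, (if k = 1 then P.a (s - 1) else P.a s) * ∫ ω,
          ⟪blockMask blk j (gradient (f (P.t s k j ω)) (P.x s (k - 1) ω)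
              - gradient (f (P.t s k j ω)) (P.w s (k - 1) j ω)),
            blockMask blk j (P.v s (k : ℤ) ω - P.v s ((k : ℤ) - 1) ω)⟫ ∂μ) ≤
        ∫ ω,
          ((K : ℝ) * (1 + P.A (s - 1) * γ) / 8 *
              ‖P.v s (k : ℤ) ω - P.v s ((k : ℤ) - 1) ω‖ ^ 2
            + (if k = 1 then P.a (s - 1) else P.a s) ^ 4 * bigL blk Q ^ 2 /
                ((K : ℝ) * (if k = 1 then P.A (s - 1) else P.A s) ^ 2 *
                  (1 + P.A (s - 1) * γ)) *
                ‖P.v s ((k : ℤ) - 1) ω - P.v s ((k : ℤ) - 2) ω‖ ^ 2) ∂μ := by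
  intro s hs hsS k hk1 hkK
  haveI := P.hprob
  set a' : ℝ := if k = 1 then P.a (s - 1) else P.a s with ha'def
  set A' : ℝ := if k = 1 then P.A (s - 1) else P.A s with hA'def
  set β : ℝ := (K : ℝ) * (1 + P.A (s - 1) * γ) / 4 with hβdef
  have hγA : 0 < 1 + P.A (s - 1) * γ := one_plus_pos P s hs hsS
  have hK0 : (0 : ℝ) < (K : ℝ) := by exact_mod_cast P.hK
  have hβ : 0 < β := by rw [hβdef]; positivity
  have ha' : 0 ≤ a' := by
    rw [ha'def]
    split
    · exact a_nonneg P (s - 1) (by omega) (by omega)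
    · exact a_nonneg P s (by omega) hsS
  have hA' : 0 < A' := by
    rw [hA'def]
    split
    · exact A_pos P (s - 1) (by omega) (by omega)
    · exact A_pos P s (by omega) hsS
  -- FRM facts
  obtain ⟨ev, eq⟩ := frm_epoch P s hs hsS (inv_all P s hs hsS) k hkK
  have hv1 : FRM (P.v s (k : ℤ)) := ev (k : ℤ) (by omega) le_rfl
  have hv0 : FRM (P.v s ((k : ℤ) - 1)) := ev _ (by omega) (by omega)
  have hvm : FRM (P.v s ((k : ℤ) - 2)) := ev _ (by omega) (by omega)
  have hxm : FRM (P.x s (k - 1)) := by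
    rcases Nat.eq_or_lt_of_le hk1 with h | h
    · rw [← h]; exact (inv_all P s hs hsS).2.1
    · exact (eq (k - 1) (by omega) (by omega)).2.1
  have hwm : ∀ j, FRM (P.w s (k - 1) j) := by
    rcases Nat.eq_or_lt_of_le hk1 with h | h
    · rw [← h]; exact (inv_all P s hs hsS).2.2.1
    · exact (eq (k - 1) (by omega) (by omega)).2.2.2
  -- integrands
  set Fj : Fin m → Ω → ℝ := fun j ω =>
    ⟪blockMask blk j (gradient (f (P.t s k j ω)) (P.x s (k - 1) ω)
        - gradient (f (P.t s k j ω)) (P.w s (k - 1) j ω)),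
      blockMask blk j (P.v s (k : ℤ) ω - P.v s ((k : ℤ) - 1) ω)⟫ with hFjdef
  set G : Ω → ℝ := fun ω =>
    (K : ℝ) * (1 + P.A (s - 1) * γ) / 8 * ‖P.v s (k : ℤ) ω - P.v s ((k : ℤ) - 1) ω‖ ^ 2
      + a' ^ 4 * bigL blk Q ^ 2 / ((K : ℝ) * A' ^ 2 * (1 + P.A (s - 1) * γ)) *
          ‖P.v s ((k : ℤ) - 1) ω - P.v s ((k : ℤ) - 2) ω‖ ^ 2 with hGdef
  have hFjint : ∀ j, MeasureTheory.Integrable (Fj j) μ := by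
    intro j
    refine frm_integrable ?_
    haveI i1 : MeasurableSingletonClass (Euc d × Euc d) := prodMSC
    haveI i2 : MeasurableSingletonClass (Euc d × Euc d × Euc d) := prodMSC
    haveI i3 : MeasurableSingletonClass (Euc d × Euc d × Euc d × Euc d) := prodMSC
    haveI i4 : MeasurableSingletonClass (Fin n × Euc d × Euc d × Euc d × Euc d) := prodMSC
    have := frm_comp (frm_pair (frm_t P s k j) (frm_pair hxm (frm_pair (hwm j)
      (frm_pair hv1 hv0))))
      (fun p : Fin n × Euc d × Euc d × Euc d × Euc d =>
        ⟪blockMask blk j (gradient (f p.1) p.2.1 - gradient (f p.1) p.2.2.1),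
          blockMask blk j (p.2.2.2.1 - p.2.2.2.2)⟫)
    exact this
  have hGint : MeasureTheory.Integrable G μ := by
    refine frm_integrable ?_
    haveI i1 : MeasurableSingletonClass (Euc d × Euc d) := prodMSC
    haveI i2 : MeasurableSingletonClass (Euc d × Euc d × Euc d) := prodMSC
    exact frm_comp (frm_pair hv1 (frm_pair hv0 hvm))
      (fun p : Euc d × Euc d × Euc d =>
        (K : ℝ) * (1 + P.A (s - 1) * γ) / 8 * ‖p.1 - p.2.1‖ ^ 2
          + a' ^ 4 * bigL blk Q ^ 2 / ((K : ℝ) * A' ^ 2 * (1 + P.A (s - 1) * γ)) *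
              ‖p.2.1 - p.2.2‖ ^ 2)
  -- the structural identity x - w = (a'/A') • tailMask (v_{k-2} - v_{k-1})
  have hxw : ∀ (ω : Ω) (j : Fin m), P.x s (k - 1) ω - P.w s (k - 1) j ω
      = (a' / A') • tailMask blk ((j : ℕ) + 1)
          (P.v s ((k : ℤ) - 2) ω - P.v s ((k : ℤ) - 1) ω) := by
    intro ω j
    by_cases hk : k = 1
    · subst hk
      have haA : a' / A' = P.a (s - 1) / P.A (s - 1) := by
        rw [ha'def, hA'def]; simp
      have hidx1 : ((1 : ℕ) : ℤ) - 2 = (-1 : ℤ) := by norm_num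
      have hidx2 : ((1 : ℕ) : ℤ) - 1 = (0 : ℤ) := by norm_num
      rw [hidx1, hidx2]
      rcases Nat.eq_or_lt_of_le hs with h2 | h2
      · -- s = 2
        have hseq : s = 2 := h2.symm
        subst hseq
        show P.x 2 0 ω - P.w 2 0 j ω = _
        rw [P.hx20 ω, P.hw20 j ω, P.hw11 j ω, sub_blockCombine,
          P.hv2m1 ω, P.hv20 ω, P.hv10 ω, P.hy11 ω, P.hx11 ω, haA,
          show (2 : ℕ) - 1 = 1 from rfl, P.hA1,
          div_self (ne_of_gt (a1_pos P)), one_smul]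
      · -- s ≥ 3
        have hs3 : 3 ≤ s := by omega
        show P.x s 0 ω - P.w s 0 j ω = _
        rw [P.hx0 s hs3 hsS ω, P.hw0 s hs3 hsS j ω,
          P.hw (s-1) (by omega) (by omega) K P.hK le_rfl j ω, sub_blockCombine,
          P.hxk (s-1) (by omega) (by omega) K P.hK le_rfl ω,
          P.hy (s-1) (by omega) (by omega) K P.hK le_rfl ω, lin_sub_lin,
          P.hvm1 s hs3 hsS ω, P.hv0 s hs3 hsS ω, ← tailMask_smul, haA]
    · -- k ≥ 2
      have hk2 : 2 ≤ k := by omega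
      have haA : a' / A' = P.a s / P.A s := by rw [ha'def, hA'def, if_neg hk, if_neg hk]
      rw [P.hw s hs hsS (k-1) (by omega) (by omega) j ω]
      rw [sub_blockCombine]
      rw [P.hxk s hs hsS (k-1) (by omega) (by omega) ω,
        P.hy s hs hsS (k-1) (by omega) (by omega) ω]
      rw [lin_sub_lin]
      rw [show ((k - 1 : ℕ) : ℤ) - 1 = (k : ℤ) - 2 by push_cast [hk1]; ring,
        show ((k - 1 : ℕ) : ℤ) = (k : ℤ) - 1 by push_cast [hk1]; ring]
      rw [← tailMask_smul, haA]
  -- pointwise inequality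
  have hpt : ∀ ω, -(∑ j : Fin m, a' * Fj j ω) ≤ G ω := by
    intro ω
    have hkp := key_pointwise (blk := blk) P.hpsd P.hflip (fun j => P.t s k j ω)
      (P.x s (k - 1) ω) (fun j => P.w s (k - 1) j ω)
      (P.v s (k : ℤ) ω) (P.v s ((k : ℤ) - 1) ω) (P.v s ((k : ℤ) - 2) ω)
      a' A' β ha' hA' hβ (fun j => hxw ω j)
    rw [hGdef]
    have hco1 : β / 2 = (K : ℝ) * (1 + P.A (s - 1) * γ) / 8 := by rw [hβdef]; ring
    have hco2 : a' ^ 4 * bigL blk Q ^ 2 / (4 * β * A' ^ 2)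
        = a' ^ 4 * bigL blk Q ^ 2 / ((K : ℝ) * A' ^ 2 * (1 + P.A (s - 1) * γ)) := by
      rw [hβdef]
      congr 1
      ring
    calc -(∑ j : Fin m, a' * Fj j ω) ≤ β / 2 * ‖P.v s (k : ℤ) ω - P.v s ((k : ℤ) - 1) ω‖ ^ 2
          + a' ^ 4 * bigL blk Q ^ 2 / (4 * β * A' ^ 2) *
            ‖P.v s ((k : ℤ) - 1) ω - P.v s ((k : ℤ) - 2) ω‖ ^ 2 := hkp
    _ = _ := by rw [hco1, hco2]
  -- integrate
  have hsum : ∑ j : Fin m, a' * ∫ ω, Fj j ω ∂μ = ∫ ω, ∑ j : Fin m, a' * Fj j ω ∂μ := by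
    rw [MeasureTheory.integral_finset_sum _ (fun j _ => (hFjint j).const_mul a')]
    exact Finset.sum_congr rfl fun j _ => (MeasureTheory.integral_const_mul a' _).symm
  calc -(∑ j : Fin m, a' * ∫ ω, Fj j ω ∂μ) = ∫ ω, -(∑ j : Fin m, a' * Fj j ω) ∂μ := by
        rw [hsum, ← MeasureTheory.integral_neg]
  _ ≤ ∫ ω, G ω ∂μ := by
      refine MeasureTheory.integral_mono ?_ hGint hpt
      exact (MeasureTheory.integrable_finset_sum _
        (fun j _ => (hFjint j).const_mul a')).neg
  _ = _ := by rw [hGdef]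

end Final
theorem stmt14 {d m n K S : ℕ} {blk : Fin d → Fin m} {f : Fin n → Euc d → ℝ}
    {g : Euc d → ℝ} {gj : Fin m → Euc d → ℝ} {Q : Fin m → Matrix (Fin d) (Fin d) ℝ}
    {γ : ℝ} {Ω : Type} [MeasurableSpace Ω] {μ : MeasureTheory.Measure Ω}
    (P : VRACoder d m n K S blk f g gj Q γ Ω μ) :
    ∀ s, 2 ≤ s → s ≤ S → ∀ k, 1 ≤ k → k ≤ K →
      -(∑ j : Fin m, (if k = 1 then P.a (s - 1) else P.a s) * ∫ ω,
          ⟪blockMask blk j (gradient (f (P.t s k j ω)) (P.x s (k - 1) ω)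
              - gradient (f (P.t s k j ω)) (P.w s (k - 1) j ω)),
            blockMask blk j (P.v s (k : ℤ) ω - P.v s ((k : ℤ) - 1) ω)⟫ ∂μ) ≤
        ∫ ω,
          ((K : ℝ) * (1 + P.A (s - 1) * γ) / 8 *
              ‖P.v s (k : ℤ) ω - P.v s ((k : ℤ) - 1) ω‖ ^ 2
            + (if k = 1 then P.a (s - 1) else P.a s) ^ 4 * bigL blk Q ^ 2 /
                ((K : ℝ) * (if k = 1 then P.A (s - 1) else P.A s) ^ 2 *
                  (1 + P.A (s - 1) * γ)) *
                ‖P.v s ((k : ℤ) - 1) ω - P.v s ((k : ℤ) - 2) ω‖ ^ 2) ∂μ := by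
  exact stmt14' P
end
end

section
/- Let L > 0, γ ≥ 0, and K ≥ 1. Define A_1 = 1/(4L) and, for s ≥ 2, A_s = A_{s−1} + a_s with a_s = √(K A_{s−1}(1 + A_{s−1}γ)/(8L)). Then for every S ≥ 1: A_S ≥ (1/(4L)) (1 + √(Kγ/(8L)))^{S−1}. -/
noncomputable section

theorem stmt19 (L γ : ℝ) (hL : 0 < L) (hγ : 0 ≤ γ) (K : ℕ) (hK : 1 ≤ K)
    (a A : ℕ → ℝ) (hA1 : A 1 = 1 / (4 * L))
    (ha : ∀ s, 2 ≤ s → a s =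
      Real.sqrt ((K : ℝ) * A (s - 1) * (1 + A (s - 1) * γ) / (8 * L)))
    (hA : ∀ s, 2 ≤ s → A s = A (s - 1) + a s) :
    ∀ S : ℕ, 1 ≤ S →
      1 / (4 * L) * (1 + Real.sqrt ((K : ℝ) * γ / (8 * L))) ^ (S - 1) ≤ A S := by
  intro S hS
  induction S, hS using Nat.le_induction with
  | base => simp [hA1]
  | succ n hn ih =>
    set q := Real.sqrt ((K : ℝ) * γ / (8 * L)) with hqdef
    have hq : 0 ≤ q := Real.sqrt_nonneg _
    have hApos : 0 < A n := lt_of_lt_of_le (by positivity) ih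
    have h2 : 2 ≤ n + 1 := by omega
    have hK1 : (1 : ℝ) ≤ K := by exact_mod_cast hK
    have key : A n * q ≤ a (n + 1) := by
      rw [ha (n + 1) h2]
      simp only [Nat.add_sub_cancel]
      have heq : A n * q = Real.sqrt ((A n) ^ 2 * ((K : ℝ) * γ / (8 * L))) := by
        rw [Real.sqrt_mul (sq_nonneg _), Real.sqrt_sq hApos.le]
      rw [heq]
      apply Real.sqrt_le_sqrt
      rw [show (A n) ^ 2 * ((K : ℝ) * γ / (8 * L)) = (K : ℝ) * A n * (A n * γ) / (8 * L) by ring,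
        div_le_div_iff₀ (by positivity) (by positivity)]
      nlinarith [show (0:ℝ) ≤ (K : ℝ) * A n * (8 * L) by positivity]
    rw [hA (n + 1) h2]
    simp only [Nat.add_sub_cancel]
    have hn1 : n - 1 + 1 = n := by omega
    calc 1 / (4 * L) * (1 + q) ^ n
        = (1 / (4 * L) * (1 + q) ^ (n - 1)) * (1 + q) := by
          rw [mul_assoc, ← pow_succ, hn1]
      _ ≤ A n * (1 + q) := by
          apply mul_le_mul_of_nonneg_right ih (by linarith)
      _ = A n + A n * q := by ring
      _ ≤ A n + a (n + 1) := by linarith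
end
end
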